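/- arXiv:2303.11025 — 2 statements merged into one kernel-verified Lean document; each statement's English description precedes it below -/
import Mathlib

section
/- If P ∈ Π(ω) is an acyclic reduced pipe dream and π ∈ S_n is a linear extension of P, then π ≤ ω in the weak order. -/
/-- A pipe dream of size `n` on the triangular shape, with boxes indexed by pairs
`(r, c)` of a row `r` and a column `c`, both `0`-indexed (rows increase southwards,
columns increase eastwards).  `cross r c = true` means that box `(r, c)` contains a
crossing tile; all other boxes contain elbow tiles.  Crossings are only allowed in
the full boxes of the triangular shape, i.e. those with `r + c + 2 ≤ n` (the boxes
with `r + c + 1 = n` are the half-boxes on the antidiagonal, which are forced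
elbows).  The `n` pipes enter horizontally on the left side in rows `0, …, n-1` and
exit vertically on the top side in columns `0, …, n-1`; pipe `k` is the pipe
entering at row `k`.  An elbow tile connects the west edge of its box to the north
edge (the pipe travelling through this elbow passes northwest of the tile) and the
south edge to the east edge (this pipe passes southeast of the tile); a crossing
tile connects west to east and south to north. -/
structure PipeDream (n : ℕ) where
  cross : ℕ → ℕ → Bool
  inShape : ∀ r c : ℕ, cross r c = true → r + c + 2 ≤ n

namespace PipeDream

variable {n : ℕ}

/-- `(P.pipes r c).1` is the label of the pipe entering box `(r, c)` from the west,
and `(P.pipes r c).2` is the label of the pipe entering box `(r, c)` from the south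
(junk value `0` if there is no box below box `(r, c)` in the triangular shape). -/
def pipes (P : PipeDream n) : ℕ → ℕ → ℕ × ℕ
  | r, c =>
    (if hc : c = 0 then r
      else if P.cross r (c - 1) then (pipes P r (c - 1)).1 else (pipes P r (c - 1)).2,
     if hr : r + c + 2 ≤ n then
        if P.cross (r + 1) c then (pipes P (r + 1) c).2 else (pipes P (r + 1) c).1
      else 0)
  termination_by r c => (n - r) + c
  decreasing_by all_goals omega

/-- The pipe entering box `(r, c)` from the west (travelling eastwards). -/
def west (P : PipeDream n) (r c : ℕ) : ℕ := (pipes P r c).1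

/-- The pipe entering box `(r, c)` from the south (travelling northwards). -/
def south (P : PipeDream n) (r c : ℕ) : ℕ := (pipes P r c).2

/-- The pipe exiting on the top side at column `c`. -/
def exitPipe (P : PipeDream n) (c : ℕ) : ℕ :=
  if P.cross 0 c then P.south 0 c else P.west 0 c

/-- `P` has exit permutation `ω`, i.e. the pipe exiting at column `c` is `ω c`;
equivalently, pipe `k` exits at column `ω⁻¹ k`. -/
def HasExitPerm (P : PipeDream n) (ω : Equiv.Perm (Fin n)) : Prop :=
  ∀ c : Fin n, P.exitPipe c.val = (ω c).val

/-- `P` is reduced: any two of its pipes cross at most once. -/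
def Reduced (P : PipeDream n) : Prop :=
  ∀ r c r' c' : ℕ, P.cross r c = true → P.cross r' c' = true → (r, c) ≠ (r', c') →
    ¬ ((P.west r c = P.west r' c' ∧ P.south r c = P.south r' c') ∨
        (P.west r c = P.south r' c' ∧ P.south r c = P.west r' c'))

/-- The arcs of the contact graph `P♯` of `P`: there is one arc for each elbow
contact of `P` (an elbow tile in a full box of the triangular shape), oriented from
the pipe passing northwest of the contact (the one travelling west-to-north) to the
pipe passing southeast of it (the one travelling south-to-east). -/
def Arc (P : PipeDream n) (i j : ℕ) : Prop :=
  ∃ r c : ℕ, r + c + 2 ≤ n ∧ P.cross r c = false ∧ P.west r c = i ∧ P.south r c = j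

/-- `P` is acyclic: its contact graph has no directed cycle. -/
def Acyclic (P : PipeDream n) : Prop := ∀ i : ℕ, ¬ Relation.TransGen P.Arc i i

/-- `i ⪯_P j` : there is a directed path (possibly empty) from `i` to `j` in the
contact graph of `P`. -/
def Path (P : PipeDream n) (i j : ℕ) : Prop := Relation.ReflTransGen P.Arc i j

/-- `π` is a linear extension of `P` : `π⁻¹ i < π⁻¹ j` for every arc `i → j` of the
contact graph of `P`. -/
def LinExt (P : PipeDream n) (π : Equiv.Perm (Fin n)) : Prop :=
  ∀ i j : Fin n, P.Arc i.val j.val → π⁻¹ i < π⁻¹ j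

/-- There is a contact (an elbow tile in a full box) between pipes `i` and `j`
at box `b`. -/
def ContactAt (P : PipeDream n) (i j : ℕ) (b : ℕ × ℕ) : Prop :=
  b.1 + b.2 + 2 ≤ n ∧ P.cross b.1 b.2 = false ∧
    ((P.west b.1 b.2 = i ∧ P.south b.1 b.2 = j) ∨
      (P.west b.1 b.2 = j ∧ P.south b.1 b.2 = i))

/-- `P'` is obtained from `P` by the flip exchanging the contact at box `b` with the
crossing at box `b'` (a contact and a crossing between the same two pipes). -/
def IsFlip (P P' : PipeDream n) (b b' : ℕ × ℕ) : Prop :=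
  b ≠ b' ∧
  P.cross b.1 b.2 = false ∧ P.cross b'.1 b'.2 = true ∧
  P'.cross b.1 b.2 = true ∧ P'.cross b'.1 b'.2 = false ∧
  (∀ r c : ℕ, (r, c) ≠ b → (r, c) ≠ b' → P.cross r c = P'.cross r c) ∧
  ((P.west b.1 b.2 = P.west b'.1 b'.2 ∧ P.south b.1 b.2 = P.south b'.1 b'.2) ∨
    (P.west b.1 b.2 = P.south b'.1 b'.2 ∧ P.south b.1 b.2 = P.west b'.1 b'.2))

/-- There is an increasing flip from `P` to `P'`: a flip exchanging a contact at a
box `b` weakly southwest of the box `b'` of the corresponding crossing. -/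
def IncFlip (P P' : PipeDream n) : Prop :=
  ∃ b b' : ℕ × ℕ, P.IsFlip P' b b' ∧ b'.1 ≤ b.1 ∧ b.2 ≤ b'.2

end PipeDream

/-- The weak order on permutations of `Fin n` : `π ≤ σ` if and only if
`Inv(π) ⊆ Inv(σ)`, where `Inv(π)` is the set of pairs `(i, j)` with `i < j` and
`π⁻¹ i > π⁻¹ j`. -/
def WeakLE {n : ℕ} (π σ : Equiv.Perm (Fin n)) : Prop :=
  ∀ i j : Fin n, i < j → π⁻¹ j < π⁻¹ i → σ⁻¹ j < σ⁻¹ i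

namespace PipeDream

variable {n : ℕ} (P : PipeDream n)

lemma west_zero (r : ℕ) : P.west r 0 = r := by
  rw [west, pipes]; simp

lemma west_succ (r c : ℕ) :
    P.west r (c+1) = if P.cross r c then P.west r c else P.south r c := by
  rw [west, pipes]; simp [west, south]

lemma south_eq (r c : ℕ) (h : r + c + 2 ≤ n) :
    P.south r c = if P.cross (r+1) c then P.south (r+1) c else P.west (r+1) c := by
  rw [south, pipes]; simp [west, south, h]

/-- The next free (non-crossing) row strictly below `r` in column `c`:
the climber entering box `(r,c)` from the south is the west pipe of that row. -/
lemma nextfree : ∀ k r c, n - r ≤ k → r + c + 2 ≤ n →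
    ∃ f, r < f ∧ f + c + 1 ≤ n ∧ P.cross f c = false ∧
      (∀ t, r < t → t < f → P.cross t c = true) ∧ P.south r c = P.west f c := by
  intro k
  induction k with
  | zero => intro r c hk h; omega
  | succ k ih =>
    intro r c hk h
    rw [P.south_eq r c h]
    cases hc : P.cross (r+1) c with
    | true =>
      have h2 : (r+1) + c + 2 ≤ n := P.inShape _ _ hc
      obtain ⟨f, hf1, hf2, hf3, hf4, hf5⟩ := ih (r+1) c (by omega) h2
      refine ⟨f, by omega, hf2, hf3, ?_, by simp [hf5]⟩
      intro t ht1 ht2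
      rcases Nat.lt_or_ge t (r+2) with h' | h'
      · have ht : t = r+1 := by omega
        rw [ht]; exact hc
      · exact hf4 t (by omega) ht2
    | false =>
      exact ⟨r+1, by omega, by omega, hc, fun t ht1 ht2 => absurd ht2 (by omega),
        by simp⟩

lemma free_unique {c f g r : ℕ} (hf1 : r < f) (hf3 : P.cross f c = false)
    (hf4 : ∀ t, r < t → t < f → P.cross t c = true)
    (hg1 : r < g) (hg3 : P.cross g c = false)
    (hg4 : ∀ t, r < t → t < g → P.cross t c = true) : f = g := by
  rcases Nat.lt_trichotomy f g with h | h | h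
  · have := hg4 f hf1 h; rw [hf3] at this; cases this
  · exact h
  · have := hf4 g hg1 h; rw [hg3] at this; cases this

lemma prevfree (c : ℕ) : ∀ b, (∀ t, t < b → P.cross t c = true) ∨
    ∃ e, e < b ∧ P.cross e c = false ∧ (∀ t, e < t → t < b → P.cross t c = true) := by
  intro b
  induction b with
  | zero => left; intro t ht; omega
  | succ b ih =>
    cases hc : P.cross b c with
    | true =>
      rcases ih with h | ⟨e, he1, he2, he3⟩
      · left; intro t ht
        rcases Nat.lt_or_ge t b with h' | h'
        · exact h t h'
        · have ht' : t = b := by omega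
          rw [ht']; exact hc
      · right
        refine ⟨e, by omega, he2, fun t ht1 ht2 => ?_⟩
        rcases Nat.lt_or_ge t b with h' | h'
        · exact he3 t ht1 h'
        · have ht' : t = b := by omega
          rw [ht']; exact hc
    | false =>
      right
      exact ⟨b, by omega, hc, fun t ht1 ht2 => absurd ht2 (by omega)⟩

lemma west_lt : ∀ c r, r + c + 1 ≤ n → P.west r c < n := by
  intro c
  induction c with
  | zero => intro r h; rw [west_zero]; omega
  | succ c ih =>
    intro r h
    rw [west_succ]
    cases hc : P.cross r c with
    | true => simp only [if_true]; exact ih r (by omega)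
    | false =>
      obtain ⟨f, hf1, hf2, hf3, hf4, hf5⟩ := P.nextfree n r c (by omega) (by omega)
      simp only [Bool.false_eq_true, if_false, hf5]
      exact ih f (by omega)

lemma west_inj : ∀ c r1 r2, r1 < r2 → r2 + c + 1 ≤ n →
    P.west r1 c ≠ P.west r2 c := by
  intro c
  induction c with
  | zero => intro r1 r2 hlt _; rw [west_zero, west_zero]; omega
  | succ c ih =>
    intro r1 r2 hlt h
    rw [west_succ, west_succ]
    cases h1 : P.cross r1 c with
    | true =>
      cases h2 : P.cross r2 c with
      | true =>
        simp only [if_true]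
        exact ih r1 r2 hlt (by omega)
      | false =>
        simp only [if_true, Bool.false_eq_true, if_false]
        obtain ⟨f2, hf1, hf2, hf3, hf4, hf5⟩ := P.nextfree n r2 c (by omega) (by omega)
        rw [hf5]
        exact ih r1 f2 (by omega) (by omega)
    | false =>
      obtain ⟨f1, hg1, hg2, hg3, hg4, hg5⟩ := P.nextfree n r1 c (by omega) (by omega)
      cases h2 : P.cross r2 c with
      | true =>
        simp only [if_true, Bool.false_eq_true, if_false]
        rw [hg5]
        rcases Nat.lt_trichotomy f1 r2 with h' | h' | h'
        · exact ih f1 r2 h' (by omega)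
        · rw [h'] at hg3; rw [hg3] at h2; cases h2
        · exact (ih r2 f1 h' (by omega)).symm
      | false =>
        simp only [Bool.false_eq_true, if_false]
        obtain ⟨f2, hh1, hh2, hh3, hh4, hh5⟩ := P.nextfree n r2 c (by omega) (by omega)
        rw [hg5, hh5]
        have hf1r2 : f1 ≤ r2 := by
          by_contra hcon
          push_neg at hcon
          have := hg4 r2 hlt hcon
          rw [h2] at this; cases this
        exact ih f1 f2 (by omega) (by omega)

lemma west_ne (c r1 r2 : ℕ) (hne : r1 ≠ r2) (h1 : r1 + c + 1 ≤ n) (h2 : r2 + c + 1 ≤ n) :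
    P.west r1 c ≠ P.west r2 c := by
  rcases Nat.lt_or_ge r1 r2 with h | h
  · exact P.west_inj c r1 r2 h h2
  · exact (P.west_inj c r2 r1 (by omega) h1).symm

lemma climb : ∀ k c a b, b - a ≤ k → a ≤ b → P.cross a c = false → P.cross b c = false →
    b + c + 1 ≤ n → Relation.ReflTransGen P.Arc (P.west a c) (P.west b c) := by
  intro k
  induction k with
  | zero =>
    intro c a b hk hab _ _ _
    have : a = b := by omega
    rw [this]
  | succ k ih =>
    intro c a b hk hab ha hb hshape
    rcases Nat.eq_or_lt_of_le hab with h | h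
    · rw [h]
    · obtain ⟨f, hf1, hf2, hf3, hf4, hf5⟩ := P.nextfree n a c (by omega) (by omega)
      have hfb : f ≤ b := by
        by_contra hcon
        push_neg at hcon
        have := hf4 b h hcon
        rw [hb] at this; cases this
      have arc1 : P.Arc (P.west a c) (P.west f c) :=
        ⟨a, c, by omega, ha, rfl, hf5⟩
      exact Relation.ReflTransGen.head arc1 (ih c f b (by omega) hfb hf3 hb hshape)

/-- Pipes `p` and `q` share no crossing box in any column `≥ c`. -/
def NC (P : PipeDream n) (p q c : ℕ) : Prop :=
  ∀ r0 c0, c ≤ c0 → P.cross r0 c0 = true →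
    ¬((P.west r0 c0 = p ∧ P.south r0 c0 = q) ∨ (P.west r0 c0 = q ∧ P.south r0 c0 = p))

lemma NC.mono {P : PipeDream n} {p q c c' : ℕ} (h : NC P p q c) (hc : c ≤ c') :
    NC P p q c' := fun r0 c0 h0 => h r0 c0 (le_trans hc h0)

end PipeDream
namespace PipeDream

variable {n : ℕ} (P : PipeDream n)

/-- **Key lemma**: if `p = W(a,c)` sits above `q = W(b,c)` in column `c` and the two
pipes never share a crossing box in columns `≥ c`, then there is a directed path
from `p` to `q` in the contact graph. -/
lemma key (hred : P.Reduced) : ∀ k c a b p q, n - c ≤ k → a < b → b + c + 1 ≤ n →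
    P.west a c = p → P.west b c = q → NC P p q c →
    Relation.TransGen P.Arc p q := by
  intro k
  induction k with
  | zero => intro c a b p q hk hab hb _ _ _; omega
  | succ k ih =>
    intro c a b p q hk hab hshape hwa hwb hnc
    cases ha : P.cross a c with
    | true =>
      have hafull : a + c + 2 ≤ n := P.inShape a c ha
      cases hbcr : P.cross b c with
      | true =>
        -- both crossing rows: both stay put; recurse at column c+1
        have hbfull : b + c + 2 ≤ n := P.inShape b c hbcr
        refine ih (c+1) a b p q (by omega) hab (by omega) ?_ ?_ (hnc.mono (by omega))
        · rw [west_succ, ha, if_pos rfl]; exact hwa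
        · rw [west_succ, hbcr, if_pos rfl]; exact hwb
      | false =>
        -- q climbs; let e = max free row < b
        -- first: if all rows in (a, b) are crossings then p,q cross at (a,c): contra
        obtain ⟨f, hf1, hf2, hf3, hf4, hf5⟩ := P.nextfree n a c (by omega) hafull
        rcases P.prevfree c b with hall | ⟨e, he1, he2, he3⟩
        · exfalso
          have hfb : f = b :=
            P.free_unique hf1 hf3 hf4 hab hbcr (fun t ht1 ht2 => hall t ht2)
          exact hnc a c le_rfl ha (Or.inl ⟨hwa, by rw [hf5, hfb, hwb]⟩)
        · rcases Nat.lt_trichotomy e a with h' | h' | h'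
          · exfalso
            have hfb : f = b :=
              P.free_unique hf1 hf3 hf4 hab hbcr (fun t ht1 ht2 => he3 t (by omega) ht2)
            exact hnc a c le_rfl ha (Or.inl ⟨hwa, by rw [hf5, hfb, hwb]⟩)
          · exfalso; rw [h'] at he2; rw [he2] at ha; cases ha
          · -- e > a : q sits at row e in column c+1; recurse
            obtain ⟨g, hg1, hg2, hg3, hg4, hg5⟩ := P.nextfree n e c (by omega) (by omega)
            have hgb : g = b := P.free_unique hg1 hg3 hg4 he1 hbcr he3
            refine ih (c+1) a e p q (by omega) h' (by omega) ?_ ?_ (hnc.mono (by omega))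
            · rw [west_succ, ha, if_pos rfl]; exact hwa
            · rw [west_succ, he2]; simp only [Bool.false_eq_true, if_false]
              rw [hg5, hgb]; exact hwb
    | false =>
      -- p is on a free row: p climbs the chain of free rows
      cases hbcr : P.cross b c with
      | false =>
        -- q also free: chain from p reaches the free row just above b, then an arc to q
        rcases P.prevfree c b with hall | ⟨e, he1, he2, he3⟩
        · exfalso; have := hall a hab; rw [ha] at this; cases this
        · have hea : a ≤ e := by
            by_contra hcon
            push_neg at hcon
            have := he3 a hcon hab
            rw [ha] at this; cases this
          have hclimb := P.climb n c a e (by omega) hea ha he2 (by omega)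
          obtain ⟨g, hg1, hg2, hg3, hg4, hg5⟩ := P.nextfree n e c (by omega) (by omega)
          have hgb : g = b := P.free_unique hg1 hg3 hg4 he1 hbcr he3
          have harc : P.Arc (P.west e c) q :=
            ⟨e, c, by omega, he2, rfl, by rw [hg5, hgb, hwb]⟩
          rw [← hwa]
          exact Relation.TransGen.tail' hclimb harc
      | true =>
        -- q on a crossing row: baton argument
        have hbfull : b + c + 2 ≤ n := P.inShape b c hbcr
        rcases P.prevfree c b with hall | ⟨e, he1, he2, he3⟩
        · exfalso; have := hall a hab; rw [ha] at this; cases this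
        · have hea : a ≤ e := by
            by_contra hcon
            push_neg at hcon
            have := he3 a hcon hab
            rw [ha] at this; cases this
          -- x := S(e,c) = W(f,c) with f > b : the climber that crossed q at (b,c)
          obtain ⟨f, hf1, hf2, hf3, hf4, hf5⟩ := P.nextfree n e c (by omega) (by omega)
          have hbf : b < f := by
            rcases Nat.lt_trichotomy f b with h' | h' | h'
            · exfalso; have := he3 f hf1 h'; rw [hf3] at this; cases this
            · exfalso; rw [h'] at hf3; rw [hf3] at hbcr; cases hbcr
            · exact h'
          obtain ⟨g, hg1, hg2, hg3, hg4, hg5⟩ := P.nextfree n b c (by omega) hbfull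
          have hgf : g = f := P.free_unique hg1 hg3 hg4 (by omega) hf3
            (fun t ht1 ht2 => hf4 t (by omega) ht2)
          -- the crossing box (b,c) has west pipe q and south pipe x
          have hSb : P.south b c = P.west f c := by rw [hg5, hgf]
          have hncx : NC P (P.west f c) q (c+1) := by
            intro r0 c0 hc0 hcr0 hor
            have hne : (r0, c0) ≠ (b, c) := by
              intro hh
              rw [Prod.mk.injEq] at hh
              omega
            exact hred r0 c0 b c hcr0 hbcr hne
              (by rw [hwb, hSb]; exact hor.symm)
          have hrec := ih (c+1) e b (P.west f c) q (by omega) he1 (by omega) ?_ ?_ hncx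
          · have hclimb := P.climb n c a e (by omega) hea ha he2 (by omega)
            have harc : P.Arc (P.west e c) (P.west f c) :=
              ⟨e, c, by omega, he2, rfl, hf5⟩
            rw [← hwa]
            exact (Relation.TransGen.tail' hclimb harc).trans hrec
          · rw [west_succ, he2]; simp only [Bool.false_eq_true, if_false]; exact hf5
          · rw [west_succ, hbcr, if_pos rfl]; exact hwb

end PipeDream
namespace PipeDream

variable {n : ℕ} (P : PipeDream n)

/-- A pipe present in column `c` exits at column `≥ c`. -/
lemma present {ω : Equiv.Perm (Fin n)} (hω : P.HasExitPerm ω) :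
    ∀ c r z (hz : z < n), r + c + 1 ≤ n → P.west r c = z →
      c ≤ ((ω⁻¹ : Equiv.Perm (Fin n)) ⟨z, hz⟩ : Fin n).val := by
  intro c
  induction c with
  | zero => intro r z hz h hw; exact Nat.zero_le _
  | succ c ih =>
    intro r z hz h hw
    have hfull : r + c + 2 ≤ n := by omega
    have hcn : c < n := by omega
    have main : ∀ m, P.west m c = z → m + c + 1 ≤ n →
        ((P.cross m c = true) ∨
          (r < m ∧ P.cross m c = false ∧ P.cross r c = false ∧
            ∀ t, r < t → t < m → P.cross t c = true)) →
        c + 1 ≤ ((ω⁻¹ : Equiv.Perm (Fin n)) ⟨z, hz⟩ : Fin n).val := by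
      intro m hm hms hspec
      have h1 : c ≤ ((ω⁻¹ : Equiv.Perm (Fin n)) ⟨z, hz⟩ : Fin n).val := ih m z hz hms hm
      have hne : z ≠ P.exitPipe c := by
        unfold exitPipe
        cases h0 : P.cross 0 c with
        | true =>
          rw [if_pos rfl]
          obtain ⟨f0, hq1, hq2, hq3, hq4, hq5⟩ := P.nextfree n 0 c (by omega) (by omega)
          rw [hq5, ← hm]
          apply P.west_ne c m f0 ?_ hms hq2
          rcases hspec with hcr | ⟨hrm, hmf, hrf, hint⟩
          · intro hh; rw [hh, hq3] at hcr; cases hcr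
          · intro hh
            rcases Nat.eq_zero_or_pos r with hr0 | hr0
            · rw [hr0] at hrf; rw [hrf] at h0; cases h0
            · have hrf0 : r < f0 := by omega
              have := hq4 r hr0 hrf0
              rw [hrf] at this; cases this
        | false =>
          simp only [Bool.false_eq_true, if_false]
          rw [← hm]
          apply P.west_ne c m 0 ?_ hms (by omega)
          rcases hspec with hcr | ⟨hrm, hmf, hrf, hint⟩
          · intro hh; rw [hh, h0] at hcr; cases hcr
          · omega
      have h2 : ((ω⁻¹ : Equiv.Perm (Fin n)) ⟨z, hz⟩ : Fin n).val ≠ c := by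
        intro heq
        apply hne
        have e1 : (ω⁻¹ : Equiv.Perm (Fin n)) ⟨z, hz⟩ = ⟨c, hcn⟩ := Fin.ext heq
        have e2 : (⟨z, hz⟩ : Fin n) = ω ⟨c, hcn⟩ := by
          rw [← e1, Equiv.Perm.coe_inv, Equiv.apply_symm_apply]
        have e3 := hω ⟨c, hcn⟩
        rw [show z = ((⟨z, hz⟩ : Fin n) : ℕ) from rfl, e2, ← e3]
      omega
    cases hcr : P.cross r c with
    | true =>
      rw [west_succ, hcr, if_pos rfl] at hw
      exact main r hw (by omega) (Or.inl hcr)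
    | false =>
      obtain ⟨f, hf1, hf2, hf3, hf4, hf5⟩ := P.nextfree n r c (by omega) hfull
      rw [west_succ, hcr] at hw
      simp only [Bool.false_eq_true, if_false] at hw
      rw [hf5] at hw
      exact main f hw hf2 (Or.inr ⟨hf1, hf3, hcr, hf4⟩)

/-- **Exit order lemma**: if `y = W(a,c)` sits above `z = W(b,c)` and the two pipes
never share a crossing box in columns `≥ c`, then `y` exits before `z`. -/
lemma exitord {ω : Equiv.Perm (Fin n)} (hω : P.HasExitPerm ω) :
    ∀ k c a b y z (hy : y < n) (hz : z < n), n - c ≤ k → a < b → b + c + 1 ≤ n →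
    P.west a c = y → P.west b c = z → NC P y z c →
    ((ω⁻¹ : Equiv.Perm (Fin n)) ⟨y, hy⟩ : Fin n).val
      < ((ω⁻¹ : Equiv.Perm (Fin n)) ⟨z, hz⟩ : Fin n).val := by
  intro k
  induction k with
  | zero => intro c a b y z hy hz hk hab hb _ _ _; omega
  | succ k ih =>
    intro c a b y z hy hz hk hab hshape hwa hwb hnc
    have hcn : c < n := by omega
    cases ha : P.cross a c with
    | true =>
      have hafull : a + c + 2 ≤ n := P.inShape a c ha
      cases hbcr : P.cross b c with
      | true =>
        have hbfull : b + c + 2 ≤ n := P.inShape b c hbcr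
        refine ih (c+1) a b y z hy hz (by omega) hab (by omega) ?_ ?_ (hnc.mono (by omega))
        · rw [west_succ, ha, if_pos rfl]; exact hwa
        · rw [west_succ, hbcr, if_pos rfl]; exact hwb
      | false =>
        obtain ⟨f, hf1, hf2, hf3, hf4, hf5⟩ := P.nextfree n a c (by omega) hafull
        rcases P.prevfree c b with hall | ⟨e, he1, he2, he3⟩
        · exfalso
          have hfb : f = b :=
            P.free_unique hf1 hf3 hf4 hab hbcr (fun t ht1 ht2 => hall t ht2)
          exact hnc a c le_rfl ha (Or.inl ⟨hwa, by rw [hf5, hfb, hwb]⟩)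
        · rcases Nat.lt_trichotomy e a with h' | h' | h'
          · exfalso
            have hfb : f = b :=
              P.free_unique hf1 hf3 hf4 hab hbcr (fun t ht1 ht2 => he3 t (by omega) ht2)
            exact hnc a c le_rfl ha (Or.inl ⟨hwa, by rw [hf5, hfb, hwb]⟩)
          · exfalso; rw [h'] at he2; rw [he2] at ha; cases ha
          · obtain ⟨g, hg1, hg2, hg3, hg4, hg5⟩ := P.nextfree n e c (by omega) (by omega)
            have hgb : g = b := P.free_unique hg1 hg3 hg4 he1 hbcr he3
            refine ih (c+1) a e y z hy hz (by omega) h' (by omega) ?_ ?_ (hnc.mono (by omega))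
            · rw [west_succ, ha, if_pos rfl]; exact hwa
            · rw [west_succ, he2]; simp only [Bool.false_eq_true, if_false]
              rw [hg5, hgb]; exact hwb
    | false =>
      rcases P.prevfree c a with hall | ⟨e, he1, he2, he3⟩
      · -- y is the exit pipe of column c
        have hexity : P.exitPipe c = y := by
          unfold exitPipe
          rcases Nat.eq_zero_or_pos a with h0 | h0
          · rw [h0] at ha
            rw [ha]
            simp only [Bool.false_eq_true, if_false]
            rw [← hwa, h0]
          · have h0c : P.cross 0 c = true := hall 0 h0
            rw [if_pos h0c]
            obtain ⟨f0, hq1, hq2, hq3, hq4, hq5⟩ := P.nextfree n 0 c (by omega) (by omega)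
            have hfa : f0 = a := P.free_unique hq1 hq3 hq4 h0 ha (fun t ht1 ht2 => hall t ht2)
            rw [hq5, hfa, hwa]
        have e2 : (⟨y, hy⟩ : Fin n) = ω ⟨c, hcn⟩ := by
          have e3 := hω ⟨c, hcn⟩
          apply Fin.ext
          rw [show ((⟨y, hy⟩ : Fin n) : ℕ) = y from rfl, ← hexity, e3]
        have h1 : (ω⁻¹ : Equiv.Perm (Fin n)) ⟨y, hy⟩ = ⟨c, hcn⟩ := by
          rw [e2, Equiv.Perm.coe_inv, Equiv.symm_apply_apply]
        have h2 : c ≤ ((ω⁻¹ : Equiv.Perm (Fin n)) ⟨z, hz⟩ : Fin n).val :=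
          P.present hω c b z hz (by omega) hwb
        have h3 : ((ω⁻¹ : Equiv.Perm (Fin n)) ⟨z, hz⟩ : Fin n).val ≠ c := by
          intro heq
          have e1 : (ω⁻¹ : Equiv.Perm (Fin n)) ⟨z, hz⟩ = ⟨c, hcn⟩ := Fin.ext heq
          have e4 : (⟨z, hz⟩ : Fin n) = ω ⟨c, hcn⟩ := by
            rw [← e1, Equiv.Perm.coe_inv, Equiv.apply_symm_apply]
          have : y = z := by
            have := e4.trans e2.symm
            exact (congrArg Fin.val this).symm
          have hyz : y ≠ z := by
            rw [← hwa, ← hwb]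
            exact P.west_inj c a b hab (by omega)
          exact hyz this
        rw [h1]
        show c < ((ω⁻¹ : Equiv.Perm (Fin n)) ⟨z, hz⟩ : Fin n).val
        omega
      · have hea : e < a := he1
        obtain ⟨f, hf1, hf2, hf3, hf4, hf5⟩ := P.nextfree n e c (by omega) (by omega)
        have hfa : f = a := P.free_unique hf1 hf3 hf4 he1 ha he3
        have hwy : P.west e (c+1) = y := by
          rw [west_succ, he2]; simp only [Bool.false_eq_true, if_false]
          rw [hf5, hfa]; exact hwa
        cases hbcr : P.cross b c with
        | true =>
          have hbfull : b + c + 2 ≤ n := P.inShape b c hbcr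
          refine ih (c+1) e b y z hy hz (by omega) (by omega) (by omega) hwy ?_
            (hnc.mono (by omega))
          rw [west_succ, hbcr, if_pos rfl]; exact hwb
        | false =>
          rcases P.prevfree c b with hall | ⟨e2, he21, he22, he23⟩
          · exfalso; have := hall a hab; rw [ha] at this; cases this
          · have hae2 : a ≤ e2 := by
              by_contra hcon
              push_neg at hcon
              have := he23 a hcon hab
              rw [ha] at this; cases this
            obtain ⟨g, hg1, hg2, hg3, hg4, hg5⟩ := P.nextfree n e2 c (by omega) (by omega)
            have hgb : g = b := P.free_unique hg1 hg3 hg4 he21 hbcr he23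
            refine ih (c+1) e e2 y z hy hz (by omega) (by omega) (by omega) hwy ?_
              (hnc.mono (by omega))
            rw [west_succ, he22]; simp only [Bool.false_eq_true, if_false]
            rw [hg5, hgb]; exact hwb

end PipeDream
namespace PipeDream

variable {n : ℕ} (P : PipeDream n)

/-- The pipe at row `r` of column `c+1` was, in column `c`, at row `r` (crossing)
or at the next free row below `r` (elbow: it is the climber caught there). -/
lemma export_spec (r c : ℕ) (h : r + c + 2 ≤ n) :
    ∃ m, P.west r (c+1) = P.west m c ∧ m + c + 1 ≤ n ∧
      ((P.cross r c = true ∧ m = r) ∨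
       (P.cross r c = false ∧ r < m ∧ P.cross m c = false ∧
         ∀ t, r < t → t < m → P.cross t c = true)) := by
  cases hcr : P.cross r c with
  | true =>
    exact ⟨r, by rw [west_succ, hcr, if_pos rfl], by omega, Or.inl ⟨rfl, rfl⟩⟩
  | false =>
    obtain ⟨f, hf1, hf2, hf3, hf4, hf5⟩ := P.nextfree n r c (by omega) h
    refine ⟨f, ?_, hf2, Or.inr ⟨rfl, hf1, hf3, hf4⟩⟩
    rw [west_succ, hcr]
    simp only [Bool.false_eq_true, if_false]
    exact hf5

/-- **Initial order lemma**: pipes `i < j` stay in their initial relative order as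
long as they have not crossed. -/
lemma initord {i j : ℕ} (hij : i < j) : ∀ c a b, a + c + 1 ≤ n → b + c + 1 ≤ n →
    P.west a c = i → P.west b c = j →
    (∀ r0 c0, c0 < c → P.cross r0 c0 = true →
      ¬((P.west r0 c0 = i ∧ P.south r0 c0 = j) ∨
        (P.west r0 c0 = j ∧ P.south r0 c0 = i))) →
    a < b := by
  intro c
  induction c with
  | zero =>
    intro a b _ _ hwa hwb _
    rw [west_zero] at hwa hwb
    omega
  | succ c ih =>
    intro a b ha hb hwa hwb hyp
    obtain ⟨ma, hma, hmas, hspa⟩ := P.export_spec a c (by omega)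
    obtain ⟨mb, hmb, hmbs, hspb⟩ := P.export_spec b c (by omega)
    have hIH : ma < mb := by
      refine ih ma mb hmas hmbs ?_ ?_ (fun r0 c0 h' => hyp r0 c0 (by omega))
      · rw [← hma]; exact hwa
      · rw [← hmb]; exact hwb
    by_contra hcon
    push_neg at hcon
    rcases Nat.eq_or_lt_of_le hcon with heq | hlt
    · rw [← heq] at hwa
      rw [hwa] at hwb
      omega
    · rcases hspb with ⟨hcb, hmbe⟩ | ⟨hcb, hbmb, hmbf, hintb⟩
      · rcases hspa with ⟨hca, hmae⟩ | ⟨hca, hama, _, _⟩ <;> omega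
      · rcases Nat.lt_trichotomy mb a with h' | h' | h'
        · rcases hspa with ⟨_, hmae⟩ | ⟨_, hama, _, _⟩ <;> omega
        · rcases hspa with ⟨hca, hmae⟩ | ⟨hca, hama, _, _⟩
          · rw [h'] at hmbf; rw [hmbf] at hca; cases hca
          · omega
        · have hca : P.cross a c = true := hintb a hlt h'
          rcases hspa with ⟨hca2, hmae⟩ | ⟨hca', _, _, _⟩
          · obtain ⟨g, hg1, hg2, hg3, hg4, hg5⟩ :=
              P.nextfree n a c (by omega) (P.inShape a c hca)
            have hgmb : g = mb := P.free_unique hg1 hg3 hg4 h' hmbf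
              (fun t ht1 ht2 => hintb t (by omega) ht2)
            refine hyp a c (by omega) hca (Or.inl ⟨?_, ?_⟩)
            · rw [← hmae, ← hma]; exact hwa
            · rw [hg5, hgmb, ← hmb]; exact hwb
          · rw [hca'] at hca; cases hca

end PipeDream

/-- If `P ∈ Π(ω)` is an acyclic reduced pipe dream and `π ∈ S_n` is a
linear extension of `P`, then `π ≤ ω` in the weak order. -/
theorem weakLE_of_linExt (n : ℕ) (ω : Equiv.Perm (Fin n)) (P : PipeDream n)
    (hred : P.Reduced) (hexit : P.HasExitPerm ω) (hacyclic : P.Acyclic)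
    (π : Equiv.Perm (Fin n)) (hlin : P.LinExt π) :
    WeakLE π ω := by
  intro i j hij hinv
  have hij' : (i : ℕ) < (j : ℕ) := hij
  have hlift : ∀ a b : ℕ, Relation.TransGen P.Arc a b → ∀ (hA : a < n) (hB : b < n),
      π⁻¹ ⟨a, hA⟩ < π⁻¹ ⟨b, hB⟩ := by
    intro a b h
    induction h with
    | single harc =>
      intro hA hB
      exact hlin ⟨a, hA⟩ ⟨_, hB⟩ harc
    | @tail b' c' hab harc ihtail =>
      intro hA hB
      obtain ⟨r, c, hsh, hcr, hW, hS⟩ := harc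
      have hmid : b' < n := by rw [← hW]; exact P.west_lt c r (by omega)
      exact lt_trans (ihtail hA hmid) (hlin ⟨b', hmid⟩ ⟨c', hB⟩ ⟨r, c, hsh, hcr, hW, hS⟩)
  by_cases hcross : ∃ r0 c0, P.cross r0 c0 = true ∧
      ((P.west r0 c0 = (i : ℕ) ∧ P.south r0 c0 = (j : ℕ)) ∨
       (P.west r0 c0 = (j : ℕ) ∧ P.south r0 c0 = (i : ℕ)))
  · obtain ⟨r0, c0, hcr, hor⟩ := hcross
    have hfull := P.inShape r0 c0 hcr
    obtain ⟨f, hf1, hf2, hf3, hf4, hf5⟩ := P.nextfree n r0 c0 (by omega) hfull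
    rcases hor with ⟨hWi, hSj⟩ | ⟨hWj, hSi⟩
    · -- pipe `i` enters the crossing from the west, `j` from the south:
      -- after this box `j` is above `i` and they never cross again, so `j` exits first.
      have hwjf : P.west f c0 = (j : ℕ) := by rw [← hf5]; exact hSj
      rcases P.prevfree c0 f with hall | ⟨e, he1, he2, he3⟩
      · -- `j` is the exit pipe of column `c0`
        have hc0 : c0 < n := by omega
        have hexitj : P.exitPipe c0 = (j : ℕ) := by
          unfold PipeDream.exitPipe
          have h0 : P.cross 0 c0 = true := hall 0 (by omega)
          rw [if_pos h0]
          obtain ⟨g, hg1, hg2, hg3, hg4, hg5⟩ := P.nextfree n 0 c0 (by omega) (by omega)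
          have hgf : g = f := P.free_unique hg1 hg3 hg4 (by omega) hf3
            (fun t ht1 ht2 => hall t ht2)
          rw [hg5, hgf, hwjf]
        have e2 : j = ω ⟨c0, hc0⟩ := by
          apply Fin.ext
          rw [← hexitj]
          exact hexit ⟨c0, hc0⟩
        have h1 : ω⁻¹ j = ⟨c0, hc0⟩ := by rw [e2, Equiv.Perm.coe_inv, Equiv.symm_apply_apply]
        have h2 : c0 ≤ ((ω⁻¹ : Equiv.Perm (Fin n)) ⟨(i : ℕ), i.isLt⟩ : Fin n).val :=
          P.present hexit c0 r0 (i : ℕ) i.isLt (by omega) hWi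
        simp only [Fin.eta] at h2
        have h3 : (ω⁻¹ i : Fin n).val ≠ c0 := by
          intro heq
          have e1 : ω⁻¹ i = (⟨c0, hc0⟩ : Fin n) := Fin.ext heq
          have e4 : i = ω ⟨c0, hc0⟩ := by rw [← e1, Equiv.Perm.coe_inv, Equiv.apply_symm_apply]
          have : i = j := e4.trans e2.symm
          rw [this] at hij'
          omega
        rw [Fin.lt_def, h1]
        show c0 < (ω⁻¹ i : Fin n).val
        omega
      · -- `j` is caught at the elbow row `e < r0`, above `i`
        have her0 : e < r0 := by
          rcases Nat.lt_trichotomy e r0 with h' | h' | h'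
          · exact h'
          · exfalso; rw [h'] at he2; rw [he2] at hcr; cases hcr
          · exfalso; have := hf4 e h' he1; rw [he2] at this; cases this
        have hwje : P.west e (c0+1) = (j : ℕ) := by
          rw [PipeDream.west_succ, he2]
          simp only [Bool.false_eq_true, if_false]
          obtain ⟨g, hg1, hg2, hg3, hg4, hg5⟩ := P.nextfree n e c0 (by omega) (by omega)
          have hgf : g = f := P.free_unique hg1 hg3 hg4 he1 hf3 he3
          rw [hg5, hgf, hwjf]
        have hwie : P.west r0 (c0+1) = (i : ℕ) := by
          rw [PipeDream.west_succ, hcr, if_pos rfl]; exact hWi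
        have hnc : PipeDream.NC P (j : ℕ) (i : ℕ) (c0+1) := by
          intro r1 c1 hc1 hcr1 horx
          have hne : (r1, c1) ≠ (r0, c0) := by intro hh; rw [Prod.mk.injEq] at hh; omega
          exact hred r1 c1 r0 c0 hcr1 hcr hne (by rw [hWi, hSj]; exact horx.symm)
        have hfin := P.exitord hexit n (c0+1) e r0 (j : ℕ) (i : ℕ) j.isLt i.isLt
          (by omega) her0 (by omega) hwje hwie hnc
        simp only [Fin.eta] at hfin
        rw [Fin.lt_def]
        exact hfin
    · -- impossible orientation: `j` would have to be above `i` before they cross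
      exfalso
      have hwif : P.west f c0 = (i : ℕ) := by rw [← hf5]; exact hSi
      have hhyp : ∀ r1 c1, c1 < c0 → P.cross r1 c1 = true →
          ¬((P.west r1 c1 = (i : ℕ) ∧ P.south r1 c1 = (j : ℕ)) ∨
            (P.west r1 c1 = (j : ℕ) ∧ P.south r1 c1 = (i : ℕ))) := by
        intro r1 c1 hc1 hcr1 horx
        have hne : (r1, c1) ≠ (r0, c0) := by intro hh; rw [Prod.mk.injEq] at hh; omega
        exact hred r1 c1 r0 c0 hcr1 hcr hne (by rw [hWj, hSi]; exact horx.symm)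
      have := P.initord hij' c0 f r0 hf2 (by omega) hwif hWj hhyp
      omega
  · -- pipes `i` and `j` never cross: there is a path `i → j` in the contact graph,
    -- contradicting the linear extension hypothesis
    exfalso
    push_neg at hcross
    have hnc : PipeDream.NC P (i : ℕ) (j : ℕ) 0 := by
      intro r1 c1 _ hcr1 horx
      rcases horx with ⟨h1, h2⟩ | ⟨h1, h2⟩
      · exact (hcross r1 c1 hcr1).1 h1 h2
      · exact (hcross r1 c1 hcr1).2 h1 h2
    have hjn : (j : ℕ) < n := j.isLt
    have hkey := P.key hred n 0 (i : ℕ) (j : ℕ) (i : ℕ) (j : ℕ) (by omega) hij'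
      (by omega) (P.west_zero (i : ℕ)) (P.west_zero (j : ℕ)) hnc
    have hfin := hlift _ _ hkey i.isLt j.isLt
    simp only [Fin.eta] at hfin
    exact lt_asymm hfin hinv
end

section
/- If π ≤ ω in the weak order on S_n, then π is a linear extension of exactly one acyclic reduced pipe dream P ∈ Π(ω): such a P exists and is unique. -/
namespace PipeDream

variable {n : ℕ}

/-! ### Basic unfolding lemmas for `pipes` -/

lemma pipes_eq (P : PipeDream n) (r c : ℕ) :
    P.pipes r c =
      (if c = 0 then r
        else if P.cross r (c - 1) then (P.pipes r (c - 1)).1 else (P.pipes r (c - 1)).2,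
       if r + c + 2 ≤ n then
          if P.cross (r + 1) c then (P.pipes (r + 1) c).2 else (P.pipes (r + 1) c).1
        else 0) := by
  rw [pipes]
  simp only [dite_eq_ite]

/-- `wd P c s` : the pipe entering box `(s, c)` from the west ("the word of column `c`"). -/
def wd (P : PipeDream n) (c s : ℕ) : ℕ := P.west s c

lemma wd_zero (P : PipeDream n) (s : ℕ) : P.wd 0 s = s := by
  rw [wd, west, pipes_eq]
  simp

lemma wd_succ (P : PipeDream n) (c s : ℕ) :
    P.wd (c + 1) s = if P.cross s c then P.wd c s else P.south s c := by
  rw [wd, west, pipes_eq]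
  simp [wd, west, south]

lemma south_eq_zero (P : PipeDream n) {s c : ℕ} (h : ¬ s + c + 2 ≤ n) :
    P.south s c = 0 := by
  rw [south, pipes_eq]; simp [h]

lemma south_unfold (P : PipeDream n) {s c : ℕ} (h : s + c + 2 ≤ n) :
    P.south s c = if P.cross (s + 1) c then P.south (s + 1) c else P.wd c (s + 1) := by
  conv_lhs => rw [south, pipes_eq]
  simp [h, south, wd, west]

lemma cross_eq_false_of (P : PipeDream n) {s c : ℕ} (h : ¬ s + c + 2 ≤ n) :
    P.cross s c = false := by
  by_contra hc
  exact h (P.inShape s c (by simpa using hc))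

/-! ### Next elbow and first elbow of a column -/

lemma exists_elbow_gt (P : PipeDream n) (c s : ℕ) :
    ∃ t, (s < t ∧ P.cross t c = false) :=
  ⟨s + n + 1, by omega, P.cross_eq_false_of (by omega)⟩

lemma exists_elbow (P : PipeDream n) (c : ℕ) : ∃ t, P.cross t c = false :=
  ⟨n, P.cross_eq_false_of (by omega)⟩

/-- The first elbow row of column `c` weakly below row `s`. -/
def nxe (P : PipeDream n) (c s : ℕ) : ℕ := Nat.find (P.exists_elbow_gt c s)

/-- The first elbow row of column `c`. -/
def fde (P : PipeDream n) (c : ℕ) : ℕ := Nat.find (P.exists_elbow c)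

lemma lt_nxe (P : PipeDream n) (c s : ℕ) : s < P.nxe c s :=
  (Nat.find_spec (P.exists_elbow_gt c s)).1

lemma cross_nxe (P : PipeDream n) (c s : ℕ) : P.cross (P.nxe c s) c = false :=
  (Nat.find_spec (P.exists_elbow_gt c s)).2

lemma cross_of_lt_nxe (P : PipeDream n) {c s t : ℕ} (h1 : s < t) (h2 : t < P.nxe c s) :
    P.cross t c = true := by
  have := Nat.find_min (P.exists_elbow_gt c s) h2
  simp only [not_and_or] at this
  rcases this with h | h
  · omega
  · simpa using h

lemma nxe_le (P : PipeDream n) {c s t : ℕ} (h1 : s < t) (h2 : P.cross t c = false) :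
    P.nxe c s ≤ t :=
  Nat.find_le ⟨h1, h2⟩

lemma nxe_eq_of_forall (P : PipeDream n) {c s t : ℕ} (h1 : s < t) (h2 : P.cross t c = false)
    (h3 : ∀ u, s < u → u < t → P.cross u c = true) : P.nxe c s = t := by
  have h4 := P.nxe_le h1 h2
  have h5 := P.lt_nxe c s
  rcases Nat.lt_or_ge (P.nxe c s) t with h | h
  · have := h3 _ h5 h
    rw [P.cross_nxe c s] at this; cases this
  · omega

lemma nxe_le_bound (P : PipeDream n) {c s : ℕ} (h : s + c + 2 ≤ n) :
    P.nxe c s ≤ n - c - 1 := by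
  apply P.nxe_le (by omega) (P.cross_eq_false_of (by omega))

lemma cross_fde (P : PipeDream n) (c : ℕ) : P.cross (P.fde c) c = false :=
  Nat.find_spec (P.exists_elbow c)

lemma cross_of_lt_fde (P : PipeDream n) {c t : ℕ} (h : t < P.fde c) :
    P.cross t c = true := by
  have := Nat.find_min (P.exists_elbow c) h
  simpa using this

lemma fde_le (P : PipeDream n) {c t : ℕ} (h : P.cross t c = false) : P.fde c ≤ t :=
  Nat.find_le h

lemma fde_le_bound (P : PipeDream n) {c : ℕ} (h : c < n) : P.fde c ≤ n - c - 1 :=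
  P.fde_le (P.cross_eq_false_of (by omega))

lemma fde_eq_nxe (P : PipeDream n) {c : ℕ} (h : P.cross 0 c = true) :
    P.fde c = P.nxe c 0 := by
  have h1 : 0 < P.fde c := by
    rcases Nat.eq_zero_or_pos (P.fde c) with h0 | h0
    · rw [← h0] at h; rw [P.cross_fde c] at h; cases h
    · exact h0
  have h2 : P.nxe c 0 ≤ P.fde c := P.nxe_le h1 (P.cross_fde c)
  have h3 : P.fde c ≤ P.nxe c 0 := P.fde_le (P.cross_nxe c 0)
  omega

/-- The south pipe of a full box is the west pipe at the next elbow row. -/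
lemma south_eq_wd_nxe (P : PipeDream n) {s c : ℕ} (h : s + c + 2 ≤ n) :
    P.south s c = P.wd c (P.nxe c s) := by
  have key : ∀ k s, n - s ≤ k → s + c + 2 ≤ n → P.south s c = P.wd c (P.nxe c s) := by
    intro k
    induction k with
    | zero => intro s hk hs; omega
    | succ k ih =>
      intro s hk hs
      rw [P.south_unfold hs]
      by_cases hcr : P.cross (s + 1) c = true
      · have hs1 : s + 1 + c + 2 ≤ n := P.inShape _ _ hcr
        rw [hcr, if_pos rfl, ih (s + 1) (by omega) hs1]
        congr 1
        have h1 : s < P.nxe c (s + 1) := by have := P.lt_nxe c (s + 1); omega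
        refine (P.nxe_eq_of_forall h1 (P.cross_nxe c (s + 1)) ?_).symm
        intro u hu1 hu2
        rcases Nat.lt_or_ge u (s + 1) with h' | h'
        · have : u = s + 1 ∨ u < s + 1 := by omega
          rcases this with rfl | h''
          · exact hcr
          · omega
        · rcases Nat.eq_or_lt_of_le h' with rfl | h''
          · exact hcr
          · exact P.cross_of_lt_nxe h'' hu2
      · have hcr' : P.cross (s + 1) c = false := by simpa using hcr
        rw [hcr', if_neg (by simp)]
        congr 1
        exact (P.nxe_eq_of_forall (by omega) hcr' (by intro u h1 h2; omega)).symm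
  exact key (n - s) s le_rfl h

lemma exitPipe_eq_wd_fde (P : PipeDream n) (c : ℕ) :
    P.exitPipe c = P.wd c (P.fde c) := by
  rw [exitPipe]
  by_cases h : P.cross 0 c = true
  · rw [if_pos h, P.south_eq_wd_nxe (P.inShape _ _ h), P.fde_eq_nxe h]
  · have h' : P.cross 0 c = false := by simpa using h
    have h0 : P.fde c = 0 := Nat.le_zero.mp (P.fde_le h')
    rw [h0]
    simp [h', wd, west]

/-! ### The displacement map of a column -/

/-- Where the pipe at position `s` of the word of column `c` comes from:
`wd (c+1) s = wd c (sg c s)`. -/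
def sg (P : PipeDream n) (c s : ℕ) : ℕ := if P.cross s c then s else P.nxe c s

lemma wd_succ_sg (P : PipeDream n) {c s : ℕ} (h : s + c + 2 ≤ n) :
    P.wd (c + 1) s = P.wd c (P.sg c s) := by
  rw [wd_succ, sg]
  by_cases hc : P.cross s c = true
  · rw [hc]; simp
  · have hc' : P.cross s c = false := by simpa using hc
    rw [hc']; simp [P.south_eq_wd_nxe h]

lemma le_sg (P : PipeDream n) (c s : ℕ) : s ≤ P.sg c s := by
  rw [sg]; split
  · exact le_rfl
  · exact (P.lt_nxe c s).le

lemma sg_lt_bound (P : PipeDream n) {c s : ℕ} (h : s + c + 2 ≤ n) : P.sg c s < n - c := by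
  rw [sg]; split
  · omega
  · have := P.nxe_le_bound (c := c) (s := s) h; omega

lemma sg_inj (P : PipeDream n) {c s s' : ℕ} (h : P.sg c s = P.sg c s') : s = s' := by
  rw [sg, sg] at h
  by_cases h1 : P.cross s c = true <;> by_cases h2 : P.cross s' c = true <;>
    simp [h1, h2] at h ⊢
  · exact h
  · exfalso; rw [h] at h1; rw [P.cross_nxe] at h1; cases h1
  · exfalso; rw [← h] at h2; rw [P.cross_nxe] at h2; cases h2
  · rcases Nat.lt_trichotomy s s' with hlt | heq | hgt
    · exfalso
      have hs' : s' < P.nxe c s := by have := P.lt_nxe c s'; omega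
      have := P.cross_of_lt_nxe hlt hs'
      simp [this] at h2
    · exact heq
    · exfalso
      have hs : s < P.nxe c s' := by have := P.lt_nxe c s; omega
      have := P.cross_of_lt_nxe hgt hs
      simp [this] at h1

lemma sg_ne_fde (P : PipeDream n) (c s : ℕ) : P.sg c s ≠ P.fde c := by
  rw [sg]; split
  · rename_i hc; intro h; subst h; rw [P.cross_fde] at hc; cases hc
  · rename_i hc
    have hc' : P.cross s c = false := by simpa using hc
    have h1 := P.fde_le hc'
    have h2 := P.lt_nxe c s
    omega

lemma wd_lt_n (P : PipeDream n) : ∀ c s, s < n - c → P.wd c s < n := by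
  intro c
  induction c with
  | zero => intro s h; rw [P.wd_zero]; omega
  | succ c ih =>
    intro s h
    have hb : s + c + 2 ≤ n := by omega
    rw [P.wd_succ_sg hb]
    exact ih _ (P.sg_lt_bound hb)

lemma wd_inj (P : PipeDream n) :
    ∀ c s s', s < n - c → s' < n - c → P.wd c s = P.wd c s' → s = s' := by
  intro c
  induction c with
  | zero => intro s s' _ _ h; rwa [P.wd_zero, P.wd_zero] at h
  | succ c ih =>
    intro s s' hs hs' h
    have hb : s + c + 2 ≤ n := by omega
    have hb' : s' + c + 2 ≤ n := by omega
    rw [P.wd_succ_sg hb, P.wd_succ_sg hb'] at h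
    exact P.sg_inj (ih _ _ (P.sg_lt_bound hb) (P.sg_lt_bound hb') h)

/-! ### Congruence: the word of column `c` only depends on earlier columns -/

lemma pipes_congr (P Q : PipeDream n) :
    ∀ k c s, (n - s) + c ≤ k → (∀ t c', c' ≤ c → P.cross t c' = Q.cross t c') →
      P.pipes s c = Q.pipes s c := by
  intro k
  induction k with
  | zero =>
    intro c s hk hyp
    have hc : c = 0 := by omega
    have hs : n ≤ s := by omega
    subst hc
    rw [P.pipes_eq s 0, Q.pipes_eq s 0]
    simp [show ¬ (s + 0 + 2 ≤ n) by omega]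
  | succ k ih =>
    intro c s hk hyp
    rw [P.pipes_eq s c, Q.pipes_eq s c]
    have e1 : (if c = 0 then (s:ℕ)
        else if P.cross s (c-1) then (P.pipes s (c-1)).1 else (P.pipes s (c-1)).2) =
        (if c = 0 then (s:ℕ)
        else if Q.cross s (c-1) then (Q.pipes s (c-1)).1 else (Q.pipes s (c-1)).2) := by
      by_cases hc : c = 0
      · simp [hc]
      · have hcc : c - 1 ≤ c := by omega
        rw [if_neg hc, if_neg hc, hyp s (c-1) hcc,
          ih (c-1) s (by omega) (fun t c' h' => hyp t c' (by omega))]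
    have e2 : (if s + c + 2 ≤ n then
          (if P.cross (s+1) c then (P.pipes (s+1) c).2 else (P.pipes (s+1) c).1) else 0) =
        (if s + c + 2 ≤ n then
          (if Q.cross (s+1) c then (Q.pipes (s+1) c).2 else (Q.pipes (s+1) c).1) else 0) := by
      by_cases hs : s + c + 2 ≤ n
      · rw [if_pos hs, if_pos hs, hyp (s+1) c le_rfl,
          ih c (s+1) (by omega) hyp]
      · rw [if_neg hs, if_neg hs]
    rw [e1, e2]

lemma wd_congr (P Q : PipeDream n) {c : ℕ}
    (hyp : ∀ t c', c' < c → P.cross t c' = Q.cross t c') (s : ℕ) :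
    P.wd c s = Q.wd c s := by
  cases c with
  | zero => rw [P.wd_zero, Q.wd_zero]
  | succ c =>
    have hp := P.pipes_congr Q ((n - s) + c) c s le_rfl (fun t c' h' => hyp t c' (by omega))
    rw [wd, wd, west, west, P.pipes_eq s (c+1), Q.pipes_eq s (c+1)]
    simp only [Nat.succ_ne_zero, if_false, Nat.add_sub_cancel]
    rw [hyp s c (by omega), hp]

/-! ### Arcs and chains -/

lemma arc_iff (P : PipeDream n) (i j : ℕ) :
    P.Arc i j ↔ ∃ c s, s + c + 2 ≤ n ∧ P.cross s c = false ∧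
      P.wd c s = i ∧ P.wd c (P.nxe c s) = j := by
  constructor
  · rintro ⟨s, c, h1, h2, h3, h4⟩
    exact ⟨c, s, h1, h2, h3, by rw [← P.south_eq_wd_nxe h1]; exact h4⟩
  · rintro ⟨c, s, h1, h2, h3, h4⟩
    exact ⟨s, c, h1, h2, h3, by rw [P.south_eq_wd_nxe h1]; exact h4⟩

lemma arc_of_elbow (P : PipeDream n) {c s : ℕ} (h1 : s + c + 2 ≤ n)
    (h2 : P.cross s c = false) : P.Arc (P.wd c s) (P.wd c (P.nxe c s)) :=
  (P.arc_iff _ _).2 ⟨c, s, h1, h2, rfl, rfl⟩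

/-- Chain lemma : consecutive elbows of a column are linked by arcs. -/
lemma chain_transGen (P : PipeDream n) {c : ℕ} :
    ∀ k e e', e' - e ≤ k → P.cross e c = false → P.cross e' c = false → e < e' →
      e' + c + 1 ≤ n → Relation.TransGen P.Arc (P.wd c e) (P.wd c e') := by
  intro k
  induction k with
  | zero => intro e e' h _ _ h3 _; omega
  | succ k ih =>
    intro e e' hk he he' hlt hb
    have hq := P.nxe_le hlt he'
    have hbox : e + c + 2 ≤ n := by omega
    have harc := P.arc_of_elbow hbox he
    rcases Nat.eq_or_lt_of_le hq with heq | hltq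
    · rw [heq] at harc
      exact Relation.TransGen.single harc
    · have h1 := P.lt_nxe c e
      exact Relation.TransGen.head harc
        (ih (P.nxe c e) e' (by omega) (P.cross_nxe c e) he' hltq hb)

/-! ### Previous elbow -/

/-- The last elbow row of column `c` strictly above row `s`. -/
def pve (P : PipeDream n) (c s : ℕ) : ℕ :=
  Nat.findGreatest (fun e => P.cross e c = false) (s - 1)

lemma pve_spec (P : PipeDream n) {c s : ℕ} (h1 : P.fde c < s) (h2 : P.cross s c = false) :
    P.cross (P.pve c s) c = false ∧ P.pve c s < s ∧ P.nxe c (P.pve c s) = s := by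
  have hw : P.fde c ≤ s - 1 := by omega
  have hsp : P.cross (P.pve c s) c = false := by
    simp only [pve]
    exact Nat.findGreatest_spec (P := fun e => PipeDream.cross P e c = false) hw
      (P.cross_fde c)
  have hle : P.pve c s ≤ s - 1 := by
    simp only [pve]
    exact Nat.findGreatest_le (P := fun e => PipeDream.cross P e c = false) _
  have hlt : P.pve c s < s := by omega
  refine ⟨hsp, hlt, P.nxe_eq_of_forall hlt h2 ?_⟩
  intro u hu1 hu2
  by_contra hcu
  have hcu' : P.cross u c = false := by simpa using hcu
  refine absurd hcu' ?_
  simp only [pve] at hu1 ⊢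
  exact Nat.findGreatest_is_greatest (P := fun e => PipeDream.cross P e c = false)
    (k := u) hu1 (by omega)

lemma exists_sg_preim (P : PipeDream n) {c s : ℕ} (h1 : s < n - c) (h2 : s ≠ P.fde c) :
    ∃ t, t < n - c - 1 ∧ P.sg c t = s := by
  by_cases hc : P.cross s c = true
  · have := P.inShape _ _ hc
    exact ⟨s, by omega, by rw [sg, if_pos hc]⟩
  · have hc' : P.cross s c = false := by simpa using hc
    have hf : P.fde c < s := lt_of_le_of_ne (P.fde_le hc') (Ne.symm h2)
    obtain ⟨hp1, hp2, hp3⟩ := P.pve_spec hf hc'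
    refine ⟨P.pve c s, by omega, ?_⟩
    rw [sg, if_neg (by simp [hp1]), hp3]

/-- Characterization of order-reversal under `sg` : exactly the crossings. -/
lemma sg_flip (P : PipeDream n) {c s s' : ℕ} (h : s < s') (hgt : P.sg c s' < P.sg c s) :
    P.cross s c = false ∧ P.cross s' c = true ∧ P.sg c s' = s' ∧
      P.sg c s = P.nxe c s ∧ s' < P.nxe c s ∧ P.nxe c s' = P.nxe c s := by
  have hs := P.le_sg c s
  have hs' := P.le_sg c s'
  have hc : ¬ P.cross s c = true := by
    intro hc
    have he : P.sg c s = s := by rw [sg, if_pos hc]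
    omega
  have hc' : P.cross s c = false := by simpa using hc
  have hsg : P.sg c s = P.nxe c s := by rw [sg, if_neg (by simp [hc'])]
  have hcs' : P.cross s' c = true := by
    by_contra hcc
    have hcc' : P.cross s' c = false := by simpa using hcc
    have h1 : P.nxe c s ≤ s' := P.nxe_le h hcc'
    have h2 : s' < P.nxe c s' := P.lt_nxe c s'
    have e1 : P.sg c s' = P.nxe c s' := by rw [sg, if_neg (by simp [hcc'])]
    rw [e1, hsg] at hgt
    omega
  have hsg' : P.sg c s' = s' := by rw [sg, if_pos hcs']
  rw [hsg', hsg] at hgt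
  refine ⟨hc', hcs', hsg', hsg, hgt, P.nxe_eq_of_forall hgt (P.cross_nxe c s) ?_⟩
  intro u hu1 hu2
  exact P.cross_of_lt_nxe (by omega) hu2

/-! ### The greedy pipe dream -/

/-- Rank of pipe `v` in the linear order `π` (junk for `v ≥ n`). -/
def rnk {n : ℕ} (π : Equiv.Perm (Fin n)) (v : ℕ) : ℕ :=
  if h : v < n then ((π⁻¹ ⟨v, h⟩ : Fin n) : ℕ) else v + n

lemma rnk_lt_iff {n : ℕ} (π : Equiv.Perm (Fin n)) (u v : Fin n) :
    rnk π u.val < rnk π v.val ↔ π⁻¹ u < π⁻¹ v := by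
  rw [rnk, rnk, dif_pos u.isLt, dif_pos v.isLt]
  exact Fin.lt_def.symm

lemma rnk_inj {n : ℕ} (π : Equiv.Perm (Fin n)) {u v : ℕ} (hu : u < n) (hv : v < n)
    (h : rnk π u = rnk π v) : u = v := by
  rw [rnk, rnk, dif_pos hu, dif_pos hv] at h
  have h2 : π⁻¹ (⟨u, hu⟩ : Fin n) = π⁻¹ ⟨v, hv⟩ := Fin.val_injective h
  have h3 : (⟨u, hu⟩ : Fin n) = ⟨v, hv⟩ := π⁻¹.injective h2
  exact congrArg Fin.val h3

/-- Position of the exiting pipe `x` in the word `w` of the current column. -/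
def cpos (n c : ℕ) (w : ℕ → ℕ) (x : ℕ) : ℕ :=
  if h : ∃ s, s < n - c ∧ w s = x then Nat.find h else 0

/-- The crossings of the greedy column with word `w` and exiting pipe `x`. -/
def colfun {n : ℕ} (π : Equiv.Perm (Fin n)) (c : ℕ) (w : ℕ → ℕ) (x : ℕ) : ℕ → Bool :=
  fun r =>
    decide (r + c + 2 ≤ n) &&
      ! (decide (r = cpos n c w x) ||
         (decide (cpos n c w x < r) &&
          decide (∀ r' < n - c, r < r' → rnk π (w r) < rnk π (w r'))))

lemma colfun_eq_true_iff {n : ℕ} (π : Equiv.Perm (Fin n)) (c : ℕ) (w : ℕ → ℕ) (x r : ℕ) :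
    colfun π c w x r = true ↔
      r + c + 2 ≤ n ∧ ¬ (r = cpos n c w x ∨ (cpos n c w x < r ∧
        ∀ r' < n - c, r < r' → rnk π (w r) < rnk π (w r'))) := by
  rw [colfun]
  simp only [Bool.and_eq_true, decide_eq_true_eq, Bool.not_eq_true', Bool.or_eq_false_iff,
    Bool.and_eq_false_iff, decide_eq_false_iff_not]
  tauto

lemma cpos_congr (n c : ℕ) (w w' : ℕ → ℕ) (x : ℕ) (hw : ∀ s, s < n - c → w s = w' s) :
    cpos n c w x = cpos n c w' x := by
  rw [cpos, cpos]
  have hiff : ∀ s, (s < n - c ∧ w s = x) ↔ (s < n - c ∧ w' s = x) := by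
    intro s
    constructor
    · rintro ⟨h1, h2⟩; exact ⟨h1, by rw [← hw s h1]; exact h2⟩
    · rintro ⟨h1, h2⟩; exact ⟨h1, by rw [hw s h1]; exact h2⟩
  by_cases h : ∃ s, s < n - c ∧ w s = x
  · have h' : ∃ s, s < n - c ∧ w' s = x := by
      obtain ⟨s, hs⟩ := h; exact ⟨s, (hiff s).1 hs⟩
    rw [dif_pos h, dif_pos h']
    have h1 : Nat.find h' ≤ Nat.find h := Nat.find_le ((hiff _).1 (Nat.find_spec h))
    have h2 : Nat.find h ≤ Nat.find h' := Nat.find_le ((hiff _).2 (Nat.find_spec h'))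
    omega
  · have h' : ¬ ∃ s, s < n - c ∧ w' s = x := by
      intro hh; obtain ⟨s, hs⟩ := hh; exact h ⟨s, (hiff s).2 hs⟩
    rw [dif_neg h, dif_neg h']

lemma colfun_congr {n : ℕ} (π : Equiv.Perm (Fin n)) (c : ℕ) (w w' : ℕ → ℕ) (x : ℕ)
    (hw : ∀ s, s < n - c → w s = w' s) (r : ℕ) :
    colfun π c w x r = colfun π c w' x r := by
  rw [colfun, colfun]
  by_cases hr : r + c + 2 ≤ n
  · rw [cpos_congr n c w w' x hw]
    have e1 : w r = w' r := hw r (by omega)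
    have e2 : (∀ r' < n - c, r < r' → rnk π (w r) < rnk π (w r'))
        ↔ (∀ r' < n - c, r < r' → rnk π (w' r) < rnk π (w' r')) := by
      constructor <;> intro hh r' h1 h2
      · rw [← e1, ← hw r' h1]; exact hh r' h1 h2
      · rw [e1, hw r' h1]; exact hh r' h1 h2
    simp [e2]
  · simp [hr]

/-- The columns of the greedy pipe dream, by strong recursion on the column index. -/
def gcol (ω π : Equiv.Perm (Fin n)) : (c : ℕ) → {f : ℕ → Bool // ∀ r, f r = true → r + c + 2 ≤ n}
  | c =>
    let P0 : PipeDream n :=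
      { cross := fun r c' => if h : c' < c then (gcol ω π c').1 r else false
        inShape := fun r c' hc => by
          by_cases h : c' < c
          · rw [dif_pos h] at hc
            exact (gcol ω π c').2 r hc
          · rw [dif_neg h] at hc
            cases hc }
    ⟨colfun π c (fun s => P0.wd c s)
        (if h : c < n then ((ω ⟨c, h⟩ : Fin n) : ℕ) else 0),
     fun r hr => by
       rw [colfun_eq_true_iff] at hr
       exact hr.1⟩
  termination_by c => c
  decreasing_by all_goals exact h

/-- The exiting pipe of column `c`. -/
def gx (ω : Equiv.Perm (Fin n)) (c : ℕ) : ℕ :=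
  if h : c < n then ((ω ⟨c, h⟩ : Fin n) : ℕ) else 0

/-- The greedy pipe dream. -/
def gP (ω π : Equiv.Perm (Fin n)) : PipeDream n :=
  ⟨fun r c => (gcol ω π c).1 r, fun r c hc => (gcol ω π c).2 r hc⟩

lemma gP_cross_eq (ω π : Equiv.Perm (Fin n)) (r c : ℕ) :
    (gP ω π).cross r c = colfun π c ((gP ω π).wd c) (gx ω c) r := by
  show (gcol ω π c).1 r = _
  rw [gcol]
  refine colfun_congr π c _ _ _ (fun s _ => ?_) r
  refine wd_congr _ _ (fun t c' h => ?_) s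
  show (if h : c' < c then (gcol ω π c').1 t else false) = (gP ω π).cross t c'
  rw [dif_pos h]
  rfl

/-! ### Invariants of the greedy construction -/

section Greedy

variable (ω π : Equiv.Perm (Fin n))

/-- `r` is a suffix-minimum position for `π`-rank in the word of column `c`. -/
def sufmin (P : PipeDream n) (c r : ℕ) : Prop :=
  ∀ r' < n - c, r < r' → rnk π (P.wd c r) < rnk π (P.wd c r')

/-- The elbow positions of the greedy column. -/
def elbAt (P : PipeDream n) (c r : ℕ) : Prop :=
  r = cpos n c (P.wd c) (gx ω c) ∨ (cpos n c (P.wd c) (gx ω c) < r ∧ sufmin π P c r)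

/-- Column `c` of `P` has the greedy shape. -/
def GreedyCol (P : PipeDream n) (c : ℕ) : Prop :=
  ∀ r, r + c + 2 ≤ n → (P.cross r c = false ↔ elbAt ω π P c r)

/-- Crossing between pipes `u` (west) and `v` (south) in column `c₁`. -/
def CPp (Q : PipeDream n) (c₁ u v : ℕ) : Prop :=
  ∃ t, Q.cross t c₁ = true ∧ Q.west t c₁ = u ∧ Q.south t c₁ = v

/-- The word of column `c` enumerates the pipes that have not yet exited. -/
def AliveInv (P : PipeDream n) (c : ℕ) : Prop :=
  ∀ v, (∃ s, s < n - c ∧ P.wd c s = v) ↔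
    (v < n ∧ ∀ c' (h : c' < n), c' < c → ((ω ⟨c', h⟩ : Fin n) : ℕ) ≠ v)

/-- Any two pipes of the word are ordered by value or by `π`-rank. -/
def VInv (P : PipeDream n) (c : ℕ) : Prop :=
  ∀ s s', s < s' → s' < n - c →
    (P.wd c s < P.wd c s' ∨ rnk π (P.wd c s) < rnk π (P.wd c s'))

/-- Pipes have crossed (in columns before `c`) iff they appear inverted in the word. -/
def XInv (P : PipeDream n) (c : ℕ) : Prop :=
  ∀ s s', s < s' → s' < n - c →
    ((P.wd c s' < P.wd c s ↔ ∃ c₁ < c, CPp P c₁ (P.wd c s') (P.wd c s)) ∧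
      ¬ ∃ c₁ < c, CPp P c₁ (P.wd c s) (P.wd c s'))

lemma gP_greedyCol (c : ℕ) : GreedyCol ω π (gP ω π) c := by
  intro r hr
  have key := colfun_eq_true_iff π c ((gP ω π).wd c) (gx ω c) r
  rw [← gP_cross_eq ω π r c] at key
  have key2 : (gP ω π).cross r c = false ↔
      ¬(r + c + 2 ≤ n ∧ ¬ (r = cpos n c ((gP ω π).wd c) (gx ω c) ∨
        (cpos n c ((gP ω π).wd c) (gx ω c) < r ∧
          ∀ r' < n - c, r < r' → rnk π ((gP ω π).wd c r) < rnk π ((gP ω π).wd c r')))) := by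
    rw [← key]
    cases h : (gP ω π).cross r c <;> simp
  rw [key2]
  unfold elbAt sufmin
  constructor
  · intro hn
    rcases not_and_or.1 hn with h1 | h1
    · exact absurd hr h1
    · rwa [not_not] at h1
  · intro he
    exact fun hh => hh.2 he

/-! #### Facts about a single column, assuming the invariants -/

variable {ω π}
variable {P : PipeDream n} {c : ℕ}

lemma gx_lt (hc : c < n) : gx ω c < n := by
  rw [gx, dif_pos hc]; exact (ω ⟨c, hc⟩).isLt

/-- The exiting pipe is in the word, at position `cpos`. -/
lemma cpos_spec (hc : c < n) (hA : AliveInv ω P c) :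
    cpos n c (P.wd c) (gx ω c) < n - c ∧ P.wd c (cpos n c (P.wd c) (gx ω c)) = gx ω c := by
  have hex : ∃ s, s < n - c ∧ P.wd c s = gx ω c := by
    rw [hA (gx ω c)]
    refine ⟨gx_lt hc, fun c' h hlt => ?_⟩
    rw [gx, dif_pos hc]
    intro heq
    have : (⟨c', h⟩ : Fin n) = ⟨c, hc⟩ := ω.injective (Fin.val_injective heq)
    rw [Fin.mk.injEq] at this
    omega
  rw [cpos, dif_pos hex]
  exact ⟨(Nat.find_spec hex).1, (Nat.find_spec hex).2⟩

/-- A pipe in the word has not yet exited. -/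
lemma not_exited (hA : AliveInv ω P c) {s : ℕ} (hs : s < n - c) {c' : ℕ} (h : c' < n)
    (hlt : c' < c) : ((ω ⟨c', h⟩ : Fin n) : ℕ) ≠ P.wd c s := by
  have := (hA (P.wd c s)).1 ⟨s, hs, rfl⟩
  exact this.2 c' h hlt

/-- Key consequence of the weak order hypothesis : if `u` is in the word and
`u < x` in value (where `x` exits now), then `u` has smaller `π`-rank than `x`;
contrapositive form. -/
lemma rnk_gx_lt (hWL : ∀ i j : Fin n, i < j → π⁻¹ j < π⁻¹ i → ω⁻¹ j < ω⁻¹ i)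
    (hc : c < n) (hA : AliveInv ω P c) {s : ℕ} (hs : s < n - c)
    (hgt : gx ω c < P.wd c s) : rnk π (gx ω c) < rnk π (P.wd c s) := by
  set v := P.wd c s with hv
  have hvn : v < n := P.wd_lt_n c s hs
  by_contra hle
  have hne : v ≠ gx ω c := by omega
  have hne' : rnk π v ≠ rnk π (gx ω c) := fun hh => hne (rnk_inj π hvn (gx_lt hc) hh)
  have hlt : rnk π v < rnk π (gx ω c) := by omega
  -- apply the weak order hypothesis to i = x < j = v
  have hx : gx ω c = ((ω ⟨c, hc⟩ : Fin n) : ℕ) := by rw [gx, dif_pos hc]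
  set i : Fin n := ω ⟨c, hc⟩ with hi
  set j : Fin n := ⟨v, hvn⟩ with hj
  have hij : i < j := by
    rw [Fin.lt_def]; rw [hx] at hgt; exact hgt
  have hpi : π⁻¹ j < π⁻¹ i := by
    rw [← rnk_lt_iff]
    have e1 : (j : ℕ) = v := rfl
    have e2 : (i : ℕ) = gx ω c := hx.symm
    rw [e1, e2]; exact hlt
  have hwc := hWL i j hij hpi
  have hio : ω⁻¹ i = ⟨c, hc⟩ := by rw [hi]; exact ω.symm_apply_apply _
  rw [hio] at hwc
  have hjlt : ((ω⁻¹ j : Fin n) : ℕ) < c := hwc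
  have := not_exited hA hs (h := (ω⁻¹ j).isLt) (by simpa using hjlt)
  exact this (congrArg Fin.val (ω.apply_symm_apply j))

/-- (F1) : every pipe above the exiting pipe is smaller in value. -/
lemma lt_gx_of_lt_cpos (hWL : ∀ i j : Fin n, i < j → π⁻¹ j < π⁻¹ i → ω⁻¹ j < ω⁻¹ i)
    (hc : c < n) (hA : AliveInv ω P c) (hV : VInv π P c) {r : ℕ}
    (hr : r < cpos n c (P.wd c) (gx ω c)) : P.wd c r < gx ω c := by
  obtain ⟨hp1, hp2⟩ := cpos_spec hc hA
  set p := cpos n c (P.wd c) (gx ω c)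
  rcases Nat.lt_trichotomy (P.wd c r) (gx ω c) with h | h | h
  · exact h
  · exfalso
    have := P.wd_inj c r p (by omega) hp1 (by rw [hp2]; exact h)
    omega
  · exfalso
    have hV' := hV r p hr hp1
    rw [hp2] at hV'
    rcases hV' with h' | h'
    · omega
    · have := rnk_gx_lt hWL hc hA (s := r) (by omega) h
      omega

/-- (F2) : every pipe below the exiting pipe has larger `π`-rank. -/
lemma rnk_gx_lt_of_cpos_lt (hWL : ∀ i j : Fin n, i < j → π⁻¹ j < π⁻¹ i → ω⁻¹ j < ω⁻¹ i)
    (hc : c < n) (hA : AliveInv ω P c) (hV : VInv π P c) {r : ℕ}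
    (hr : cpos n c (P.wd c) (gx ω c) < r) (hrn : r < n - c) :
    rnk π (gx ω c) < rnk π (P.wd c r) := by
  obtain ⟨hp1, hp2⟩ := cpos_spec hc hA
  set p := cpos n c (P.wd c) (gx ω c)
  rcases Nat.lt_trichotomy (gx ω c) (P.wd c r) with h | h | h
  · exact rnk_gx_lt hWL hc hA hrn h
  · exfalso
    have := P.wd_inj c r p hrn hp1 (by rw [hp2]; exact h.symm)
    omega
  · have hV' := hV p r hr hrn
    rw [hp2] at hV'
    rcases hV' with h' | h'
    · omega
    · exact h'

end Greedy

section Greedy2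

variable {n : ℕ} {ω π : Equiv.Perm (Fin n)} {P : PipeDream n} {c : ℕ}

/-- The exiting position is an elbow. -/
lemma cross_cpos_eq_false (hc : c < n) (hA : AliveInv ω P c) (hg : GreedyCol ω π P c) :
    P.cross (cpos n c (P.wd c) (gx ω c)) c = false := by
  set p := cpos n c (P.wd c) (gx ω c) with hp
  by_cases hb : p + c + 2 ≤ n
  · exact (hg p hb).2 (Or.inl rfl)
  · exact P.cross_eq_false_of hb

/-- Positions above the exiting position are crossings. -/
lemma cross_of_lt_cpos (hc : c < n) (hA : AliveInv ω P c) (hg : GreedyCol ω π P c)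
    {r : ℕ} (hr : r < cpos n c (P.wd c) (gx ω c)) : P.cross r c = true := by
  obtain ⟨hp1, hp2⟩ := cpos_spec hc hA
  have hb : r + c + 2 ≤ n := by omega
  cases hcr : P.cross r c
  · exfalso
    rcases (hg r hb).1 hcr with h | h
    · omega
    · omega
  · rfl

/-- The first elbow of the greedy column is the exiting position. -/
lemma fde_eq_cpos (hc : c < n) (hA : AliveInv ω P c) (hg : GreedyCol ω π P c) :
    P.fde c = cpos n c (P.wd c) (gx ω c) := by
  have h1 := P.fde_le (cross_cpos_eq_false hc hA hg)
  rcases Nat.eq_or_lt_of_le h1 with h | h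
  · exact h
  · have := cross_of_lt_cpos hc hA hg h
    rw [P.cross_fde] at this
    cases this

lemma nxe_of_lt_cpos (hc : c < n) (hA : AliveInv ω P c) (hg : GreedyCol ω π P c)
    {t : ℕ} (ht : t < cpos n c (P.wd c) (gx ω c)) :
    P.nxe c t = cpos n c (P.wd c) (gx ω c) :=
  P.nxe_eq_of_forall ht (cross_cpos_eq_false hc hA hg)
    (fun u hu1 hu2 => cross_of_lt_cpos hc hA hg hu2)

/-- A crossing position is not a suffix minimum. -/
lemma not_sufmin_of_cross (hg : GreedyCol ω π P c) {t : ℕ} (hct : P.cross t c = true)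
    (ht : cpos n c (P.wd c) (gx ω c) < t) :
    ∃ r', r' < n - c ∧ t < r' ∧ rnk π (P.wd c r') ≤ rnk π (P.wd c t) := by
  have hb := P.inShape t c hct
  have h1 : ¬ elbAt ω π P c t := by
    intro he
    rw [(hg t hb).2 he] at hct
    cases hct
  rw [elbAt] at h1
  push_neg at h1
  have h2 := h1.2 ht
  rw [sufmin] at h2
  push_neg at h2
  obtain ⟨r', h3, h4, h5⟩ := h2
  exact ⟨r', h3, h4, h5⟩

/-- (F5) : at a crossing below the exiting position, the traveller (south pipe) has
smaller rank and bigger value than the west pipe. -/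
lemma cross_key (hc : c < n) (hA : AliveInv ω P c) (hV : VInv π P c)
    (hg : GreedyCol ω π P c) {t : ℕ} (hct : P.cross t c = true)
    (ht : cpos n c (P.wd c) (gx ω c) < t) :
    rnk π (P.wd c (P.nxe c t)) < rnk π (P.wd c t) ∧ P.wd c t < P.wd c (P.nxe c t) := by
  have hb := P.inShape t c hct
  set q := P.nxe c t with hq
  have hq1 : t < q := P.lt_nxe c t
  have hq2 : q ≤ n - c - 1 := P.nxe_le_bound hb
  have hqn : q < n - c := by omega
  -- the minimum of the ranks over positions strictly below `t`
  have hne : q ∈ Finset.Ico (t + 1) (n - c) := by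
    rw [Finset.mem_Ico]; omega
  obtain ⟨m, hm, hmin⟩ := Finset.exists_min_image (Finset.Ico (t + 1) (n - c))
    (fun y => rnk π (P.wd c y)) ⟨q, hne⟩
  rw [Finset.mem_Ico] at hm
  have wdinj : ∀ y y', y < n - c → y' < n - c → rnk π (P.wd c y) = rnk π (P.wd c y') →
      y = y' := by
    intro y y' hy hy' hr
    exact P.wd_inj c y y' hy hy'
      (rnk_inj π (P.wd_lt_n c y hy) (P.wd_lt_n c y' hy') hr)
  have hcm : P.cross m c = false := by
    cases hcm : P.cross m c
    · rfl
    · exfalso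
      obtain ⟨r', hr1, hr2, hr3⟩ := not_sufmin_of_cross hg hcm (by omega)
      have h4 := hmin r' (by rw [Finset.mem_Ico]; omega)
      have h5 : rnk π (P.wd c m) = rnk π (P.wd c r') := by omega
      have := wdinj m r' (by omega) hr1 h5
      omega
  have hqm : q ≤ m := P.nxe_le (by omega) hcm
  have hrqm : rnk π (P.wd c q) ≤ rnk π (P.wd c m) := by
    rcases Nat.eq_or_lt_of_le hqm with h | h
    · rw [h]
    · -- q is an elbow strictly above m, hence a suffix minimum
      have helb : elbAt ω π P c q := by
        refine (hg q (by omega)).1 ?_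
        rw [hq]; exact P.cross_nxe c t
      rcases helb with h' | h'
      · omega
      · exact (h'.2 m (by omega) h).le
  have hrmt : rnk π (P.wd c m) < rnk π (P.wd c t) := by
    obtain ⟨r', hr1, hr2, hr3⟩ := not_sufmin_of_cross hg hct ht
    have h4 := hmin r' (by rw [Finset.mem_Ico]; omega)
    have h5 : rnk π (P.wd c m) ≤ rnk π (P.wd c t) := by omega
    rcases Nat.eq_or_lt_of_le h5 with h6 | h6
    · exfalso
      have := wdinj m t (by omega) (by omega) h6
      omega
    · exact h6
  have hr : rnk π (P.wd c q) < rnk π (P.wd c t) := by omega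
  refine ⟨hr, ?_⟩
  rcases hV t q hq1 hqn with h | h
  · exact h
  · omega

end Greedy2

section Greedy3

variable {n : ℕ} {ω π : Equiv.Perm (Fin n)} {P : PipeDream n} {c : ℕ}

lemma alive_step (hc : c < n) (hA : AliveInv ω P c) (hg : GreedyCol ω π P c) :
    AliveInv ω P (c + 1) := by
  obtain ⟨hp1, hp2⟩ := cpos_spec (ω := ω) hc hA
  set p := cpos n c (P.wd c) (gx ω c) with hp
  have hfde : P.fde c = p := by rw [hp]; exact fde_eq_cpos hc hA hg
  intro v
  constructor
  · rintro ⟨s, hs, rfl⟩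
    have hb : s + c + 2 ≤ n := by omega
    rw [P.wd_succ_sg hb]
    have hsg : P.sg c s < n - c := P.sg_lt_bound hb
    obtain ⟨hv, hall⟩ := (hA _).1 ⟨P.sg c s, hsg, rfl⟩
    refine ⟨hv, fun c' h hlt => ?_⟩
    rcases Nat.lt_or_ge c' c with h' | h'
    · exact hall c' h h'
    · have hcc : c' = c := by omega
      intro heq
      have hfin : (⟨c', h⟩ : Fin n) = ⟨c, hc⟩ := Fin.ext hcc
      rw [hfin] at heq
      have hx : P.wd c (P.sg c s) = gx ω c := by
        rw [← heq, gx, dif_pos hc]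
      have : P.sg c s = p := P.wd_inj c _ _ hsg hp1 (by rw [hx, hp2])
      rw [← hfde] at this
      exact P.sg_ne_fde c s this
  · rintro ⟨hv, hall⟩
    obtain ⟨s, hs, hws⟩ := (hA v).2 ⟨hv, fun c' h hlt => hall c' h (by omega)⟩
    have hsp : s ≠ p := by
      intro heq
      have : gx ω c = v := by rw [← hp2, ← heq, hws]
      have h2 := hall c hc (by omega)
      rw [gx, dif_pos hc] at this
      exact h2 this
    rw [← hfde] at hsp
    obtain ⟨t, ht1, ht2⟩ := P.exists_sg_preim hs hsp
    refine ⟨t, by omega, ?_⟩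
    rw [P.wd_succ_sg (by omega), ht2, hws]

lemma v_step (hc : c < n) (hA : AliveInv ω P c) (hV : VInv π P c)
    (hg : GreedyCol ω π P c) : VInv π P (c + 1) := by
  intro s s' hss hs'
  have hb : s + c + 2 ≤ n := by omega
  have hb' : s' + c + 2 ≤ n := by omega
  rw [P.wd_succ_sg hb, P.wd_succ_sg hb']
  rcases Nat.lt_trichotomy (P.sg c s) (P.sg c s') with h | h | h
  · exact hV _ _ h (P.sg_lt_bound hb')
  · exact absurd (P.sg_inj h) (by omega)
  · obtain ⟨hcs, hcs', hsg', hsgeq, hlt2, hnxe⟩ := P.sg_flip hss h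
    -- s is an elbow hence weakly below the exiting position
    have hsp : cpos n c (P.wd c) (gx ω c) ≤ s := by
      rcases (hg s hb).1 hcs with h' | h'
      · omega
      · omega
    have hkey := cross_key hc hA hV hg hcs' (by omega)
    rw [hnxe] at hkey
    right
    rw [hsgeq, hsg']
    exact hkey.1

lemma x_step (hc : c < n) (hA : AliveInv ω P c) (hV : VInv π P c) (hX : XInv P c)
    (hg : GreedyCol ω π P c) : XInv P (c + 1) := by
  intro s s' hss hs'
  have hb : s + c + 2 ≤ n := by omega
  have hb' : s' + c + 2 ≤ n := by omega
  rw [P.wd_succ_sg hb, P.wd_succ_sg hb']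
  have hsgb : P.sg c s < n - c := P.sg_lt_bound hb
  have hsgb' : P.sg c s' < n - c := P.sg_lt_bound hb'
  rcases Nat.lt_trichotomy (P.sg c s) (P.sg c s') with h | h | h
  · -- order preserved
    obtain ⟨hX1, hX2⟩ := hX _ _ h hsgb'
    constructor
    · constructor
      · intro hlt
        obtain ⟨c₁, hc₁, hcp⟩ := hX1.1 hlt
        exact ⟨c₁, by omega, hcp⟩
      · rintro ⟨c₁, hc₁, hcp⟩
        rcases Nat.lt_or_ge c₁ c with h' | h'
        · exact hX1.2 ⟨c₁, h', hcp⟩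
        · exfalso
          have hcc : c₁ = c := by omega
          subst hcc
          obtain ⟨t, hct, hwt, hst⟩ := hcp
          have htb := P.inShape t c₁ hct
          have htn : t < n - c₁ := by omega
          have hts : t = P.sg c₁ s' :=
            P.wd_inj c₁ _ _ htn hsgb' hwt
          have hnb : P.nxe c₁ t < n - c₁ := by
            have := P.nxe_le_bound htb; omega
          have hnt : P.nxe c₁ t = P.sg c₁ s := by
            refine P.wd_inj c₁ _ _ hnb hsgb ?_
            rw [← P.south_eq_wd_nxe htb]; exact hst
          have := P.lt_nxe c₁ t
          omega
    · rintro ⟨c₁, hc₁, t, hct, hwt, hst⟩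
      rcases Nat.lt_or_ge c₁ c with h' | h'
      · exact (hX _ _ h hsgb').2 ⟨c₁, h', t, hct, hwt, hst⟩
      · have hcc : c₁ = c := by omega
        subst hcc
        obtain htb := P.inShape t c₁ hct
        have hts : t = P.sg c₁ s := P.wd_inj c₁ _ _ (by omega) hsgb hwt
        have hnt : P.nxe c₁ t = P.sg c₁ s' := by
          refine P.wd_inj c₁ _ _ (by have := P.nxe_le_bound htb; omega) hsgb' ?_
          rw [← P.south_eq_wd_nxe htb]; exact hst
        -- `sg s` is a crossing position, so `sg s = s` and `cross s = true`
        by_cases hcs : P.cross s c₁ = true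
        · have he1 : P.sg c₁ s = s := by rw [sg, if_pos hcs]
          rw [he1] at hts
          subst hts
          -- sg s' = nxe t with t = s
          by_cases hcs' : P.cross s' c₁ = true
          · have he2 : P.sg c₁ s' = s' := by rw [sg, if_pos hcs']
            rw [he2] at hnt
            have := P.cross_nxe c₁ t
            rw [hnt] at this
            rw [this] at hcs'
            cases hcs'
          · have hcs'' : P.cross s' c₁ = false := by simpa using hcs'
            have he2 : P.sg c₁ s' = P.nxe c₁ s' := by rw [sg, if_neg (by simp [hcs''])]
            rw [he2] at hnt
            have h1 : P.nxe c₁ t ≤ s' := P.nxe_le hss hcs''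
            have h2 : s' < P.nxe c₁ s' := P.lt_nxe c₁ s'
            omega
        · have hcs'' : P.cross s c₁ = false := by simpa using hcs
          have he1 : P.sg c₁ s = P.nxe c₁ s := by rw [sg, if_neg (by simp [hcs''])]
          rw [he1] at hts
          have := P.cross_nxe c₁ s
          rw [← hts] at this
          rw [this] at hct
          cases hct
  · exact absurd (P.sg_inj h) (by omega)
  · -- flip case : the pair crosses in column `c`
    obtain ⟨hcs, hcs', hsg', hsgeq, hlt2, hnxe⟩ := P.sg_flip hss h
    have hsp : cpos n c (P.wd c) (gx ω c) ≤ s := by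
      rcases (hg s hb).1 hcs with h' | h'
      · omega
      · omega
    have hkey := cross_key hc hA hV hg hcs' (by omega)
    rw [hnxe] at hkey
    have hvu : P.wd c (P.sg c s') < P.wd c (P.sg c s) := by
      rw [hsg', hsgeq]; exact hkey.2
    have hnb : P.nxe c s < n - c := by rw [← hsgeq]; exact hsgb
    constructor
    · constructor
      · intro _
        refine ⟨c, by omega, s', hcs', ?_, ?_⟩
        · show P.west s' c = P.wd c (P.sg c s')
          rw [hsg']
          rfl
        · show P.south s' c = P.wd c (P.sg c s)
          rw [P.south_eq_wd_nxe hb', hnxe, hsgeq]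
      · intro _
        exact hvu
    · rintro ⟨c₁, hc₁, t, hct, hwt, hst⟩
      rcases Nat.lt_or_ge c₁ c with h' | h'
      · -- would contradict X1 at positions (s', nxe s)
        have hX1 := (hX s' (P.nxe c s) hlt2 hnb).1
        have : P.wd c (P.nxe c s) < P.wd c s' := by
          rw [hX1]
          refine ⟨c₁, h', t, hct, ?_, ?_⟩
          · rw [hwt, hsgeq]
          · rw [hst, hsg']
        rw [hsg', hsgeq] at hvu
        omega
      · have hcc : c₁ = c := by omega
        subst hcc
        have htb := P.inShape t c₁ hct
        have hts : t = P.nxe c₁ s := by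
          refine P.wd_inj c₁ _ _ (by omega) hnb ?_
          show P.west t c₁ = P.wd c₁ (P.nxe c₁ s)
          rw [hwt, hsgeq]
        have := P.cross_nxe c₁ s
        rw [← hts] at this
        rw [this] at hct
        cases hct

/-- The three invariants hold as soon as all previous columns are greedy. -/
lemma invs_of_greedyCols (P : PipeDream n) :
    ∀ c, (∀ c' < c, GreedyCol ω π P c') →
      AliveInv ω P c ∧ VInv π P c ∧ XInv P c := by
  intro c
  induction c with
  | zero =>
    intro _
    refine ⟨?_, ?_, ?_⟩
    · intro v
      constructor
      · rintro ⟨s, hs, rfl⟩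
        rw [P.wd_zero]
        exact ⟨by omega, fun c' h hlt => by omega⟩
      · rintro ⟨hv, _⟩
        exact ⟨v, by omega, P.wd_zero v⟩
    · intro s s' hss hs'
      rw [P.wd_zero, P.wd_zero]
      exact Or.inl hss
    · intro s s' hss hs'
      rw [P.wd_zero, P.wd_zero]
      refine ⟨⟨fun h => by omega, ?_⟩, ?_⟩
      · rintro ⟨c₁, hc₁, _⟩; omega
      · rintro ⟨c₁, hc₁, _⟩; omega
  | succ c ih =>
    intro hgs
    obtain ⟨hA, hV, hX⟩ := ih (fun c' h => hgs c' (by omega))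
    rcases Nat.lt_or_ge c n with hc | hc
    · have hg := hgs c (by omega)
      exact ⟨alive_step hc hA hg, v_step hc hA hV hg, x_step hc hA hV hX hg⟩
    · refine ⟨?_, ?_, ?_⟩
      · intro v
        constructor
        · rintro ⟨s, hs, _⟩; omega
        · rintro ⟨hv, hall⟩
          exfalso
          set j : Fin n := ⟨v, hv⟩ with hj
          have h1 := hall (ω⁻¹ j).val (ω⁻¹ j).isLt (by have := (ω⁻¹ j).isLt; omega)
          apply h1
          exact congrArg Fin.val (ω.apply_symm_apply j)
      · intro s s' hss hs'; omega
      · intro s s' hss hs'; omega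

end Greedy3

/-! ### The greedy pipe dream has the required properties -/

section Exist

variable {n : ℕ} {ω π : Equiv.Perm (Fin n)}

lemma gP_invs (c : ℕ) :
    AliveInv ω (gP ω π) c ∧ VInv π (gP ω π) c ∧ (gP ω π).XInv c :=
  invs_of_greedyCols (gP ω π) c (fun c' _ => gP_greedyCol ω π c')

lemma gP_hasExitPerm : (gP ω π).HasExitPerm ω := by
  intro c
  obtain ⟨hA, hV, hX⟩ := gP_invs (ω := ω) (π := π) c.val
  have hg := gP_greedyCol ω π c.val
  obtain ⟨hp1, hp2⟩ := cpos_spec c.isLt hA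
  rw [(gP ω π).exitPipe_eq_wd_fde, fde_eq_cpos c.isLt hA hg, hp2]
  rw [gx, dif_pos c.isLt]

lemma gP_arc_rnk (hWL : ∀ i j : Fin n, i < j → π⁻¹ j < π⁻¹ i → ω⁻¹ j < ω⁻¹ i)
    {i j : ℕ} (h : (gP ω π).Arc i j) : rnk π i < rnk π j ∧ i < n ∧ j < n := by
  rw [arc_iff] at h
  obtain ⟨c, s, hb, hcr, hi, hj⟩ := h
  have hc : c < n := by omega
  obtain ⟨hA, hV, hX⟩ := gP_invs (ω := ω) (π := π) c
  have hg := gP_greedyCol ω π c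
  have hq1 : s < (gP ω π).nxe c s := (gP ω π).lt_nxe c s
  have hq2 : (gP ω π).nxe c s ≤ n - c - 1 := (gP ω π).nxe_le_bound hb
  have hin : i < n := by rw [← hi]; exact (gP ω π).wd_lt_n c s (by omega)
  have hjn : j < n := by rw [← hj]; exact (gP ω π).wd_lt_n c _ (by omega)
  refine ⟨?_, hin, hjn⟩
  rw [← hi, ← hj]
  rcases (hg s hb).1 hcr with h' | h'
  · -- s is the exiting position
    obtain ⟨hp1, hp2⟩ := cpos_spec hc hA
    rw [h'] at hq1 hq2
    rw [h', hp2]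
    exact rnk_gx_lt_of_cpos_lt hWL hc hA hV hq1 (by omega)
  · exact h'.2 _ (by omega) hq1

lemma gP_linExt (hWL : ∀ i j : Fin n, i < j → π⁻¹ j < π⁻¹ i → ω⁻¹ j < ω⁻¹ i) :
    (gP ω π).LinExt π := by
  intro i j harc
  exact (rnk_lt_iff π i j).1 (gP_arc_rnk hWL harc).1

lemma gP_acyclic (hWL : ∀ i j : Fin n, i < j → π⁻¹ j < π⁻¹ i → ω⁻¹ j < ω⁻¹ i) :
    (gP ω π).Acyclic := by
  intro i hT
  have key : ∀ a b : ℕ, Relation.TransGen (gP ω π).Arc a b → rnk π a < rnk π b := by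
    intro a b hab
    induction hab with
    | single h' => exact (gP_arc_rnk hWL h').1
    | tail _ h' ih => exact lt_trans ih (gP_arc_rnk hWL h').1
  have := key i i hT
  omega

/-- Core fact for reducedness: at any crossing, the west pipe is smaller than the
south pipe. -/
lemma gP_cross_lt (hWL : ∀ i j : Fin n, i < j → π⁻¹ j < π⁻¹ i → ω⁻¹ j < ω⁻¹ i)
    {t c : ℕ} (hct : (gP ω π).cross t c = true) :
    (gP ω π).wd c t < (gP ω π).wd c ((gP ω π).nxe c t) := by
  have hb := (gP ω π).inShape t c hct
  have hc : c < n := by omega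
  obtain ⟨hA, hV, hX⟩ := gP_invs (ω := ω) (π := π) c
  have hg := gP_greedyCol ω π c
  obtain ⟨hp1, hp2⟩ := cpos_spec hc hA
  set p := cpos n c ((gP ω π).wd c) (gx ω c) with hp
  rcases Nat.lt_trichotomy t p with h | h | h
  · rw [nxe_of_lt_cpos hc hA hg h, hp2]
    exact lt_gx_of_lt_cpos hWL hc hA hV h
  · exfalso
    have := cross_cpos_eq_false (ω := ω) (π := π) hc hA hg
    rw [← hp, ← h, hct] at this
    cases this
  · exact (cross_key hc hA hV hg hct h).2

lemma gP_no_double (hWL : ∀ i j : Fin n, i < j → π⁻¹ j < π⁻¹ i → ω⁻¹ j < ω⁻¹ i)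
    {t₁ c₁ t₂ c₂ : ℕ} (hlt : c₁ < c₂) (h1 : (gP ω π).cross t₁ c₁ = true)
    (h2 : (gP ω π).cross t₂ c₂ = true)
    (hm : ((gP ω π).west t₁ c₁ = (gP ω π).west t₂ c₂ ∧
            (gP ω π).south t₁ c₁ = (gP ω π).south t₂ c₂) ∨
          ((gP ω π).west t₁ c₁ = (gP ω π).south t₂ c₂ ∧
            (gP ω π).south t₁ c₁ = (gP ω π).west t₂ c₂)) : False := by
  set G := gP ω π with hG
  have hb₂ := G.inShape t₂ c₂ h2
  obtain ⟨hA, hV, hX⟩ := gP_invs (ω := ω) (π := π) c₂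
  rw [← hG] at hA hV hX
  have hq1 : t₂ < G.nxe c₂ t₂ := G.lt_nxe c₂ t₂
  have hq2 : G.nxe c₂ t₂ ≤ n - c₂ - 1 := G.nxe_le_bound hb₂
  have hab : G.wd c₂ t₂ < G.wd c₂ (G.nxe c₂ t₂) := gP_cross_lt hWL h2
  obtain ⟨hX1, hX2⟩ := hX t₂ (G.nxe c₂ t₂) hq1 (by omega)
  have hsou : G.south t₂ c₂ = G.wd c₂ (G.nxe c₂ t₂) := G.south_eq_wd_nxe hb₂
  rcases hm with ⟨hw, hs⟩ | ⟨hw, hs⟩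
  · -- box 1 is an earlier crossing between the same oriented pair
    exact hX2 ⟨c₁, hlt, t₁, h1, hw, by rw [hs, hsou]⟩
  · have : G.wd c₂ (G.nxe c₂ t₂) < G.wd c₂ t₂ := by
      rw [hX1]
      exact ⟨c₁, hlt, t₁, h1, by rw [hw, hsou], hs⟩
    omega

lemma gP_reduced (hWL : ∀ i j : Fin n, i < j → π⁻¹ j < π⁻¹ i → ω⁻¹ j < ω⁻¹ i) :
    (gP ω π).Reduced := by
  intro t₁ c₁ t₂ c₂ h1 h2 hne hm
  set G := gP ω π with hG
  rcases Nat.lt_trichotomy c₁ c₂ with h | h | h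
  · exact gP_no_double hWL h h1 h2 hm
  · -- same column
    subst h
    have ht : t₁ ≠ t₂ := by
      intro hh; exact hne (by rw [hh])
    have hb₁ := G.inShape t₁ c₁ h1
    have hb₂ := G.inShape t₂ c₁ h2
    have hn₁ : t₁ < n - c₁ := by omega
    have hn₂ : t₂ < n - c₁ := by omega
    rcases hm with ⟨hw, _⟩ | ⟨hw, hs⟩
    · exact ht (G.wd_inj c₁ t₁ t₂ hn₁ hn₂ hw)
    · -- swapped : t₁ = nxe t₂, impossible since t₁ is a crossing
      rw [G.south_eq_wd_nxe hb₂] at hw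
      have hq2 : G.nxe c₁ t₂ ≤ n - c₁ - 1 := G.nxe_le_bound hb₂
      have : t₁ = G.nxe c₁ t₂ := G.wd_inj c₁ _ _ hn₁ (by omega) hw
      have hcf := G.cross_nxe c₁ t₂
      rw [← this, h1] at hcf
      cases hcf
  · refine gP_no_double hWL h h2 h1 ?_
    rcases hm with ⟨hw, hs⟩ | ⟨hw, hs⟩
    · exact Or.inl ⟨hw.symm, hs.symm⟩
    · exact Or.inr ⟨hs.symm, hw.symm⟩

end Exist

/-! ### The path lemma : an inverted non-crossing pair is linked by a path -/

section PathLemma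

variable {n : ℕ} {Q : PipeDream n}

lemma le_pve (Q : PipeDream n) {c s e : ℕ} (he : Q.cross e c = false) (hlt : e < s) :
    e ≤ Q.pve c s := by
  simp only [pve]
  exact Nat.le_findGreatest (P := fun e => PipeDream.cross Q e c = false) (by omega) he

lemma path_lemma (hred : Q.Reduced) :
    ∀ k d s s', n - d ≤ k → s < s' → s' < n - d →
      (∀ c₁ t, d ≤ c₁ → Q.cross t c₁ = true →
        ¬ ((Q.west t c₁ = Q.wd d s ∧ Q.south t c₁ = Q.wd d s') ∨
           (Q.west t c₁ = Q.wd d s' ∧ Q.south t c₁ = Q.wd d s))) →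
      Relation.TransGen Q.Arc (Q.wd d s) (Q.wd d s') := by
  intro k
  induction k with
  | zero => intro d s s' hk hss hs' _; omega
  | succ k ih =>
    intro d s s' hk hss hs' hnc
    have hnd : 1 ≤ n - d := by omega
    by_cases hsf : s = Q.fde d
    · have hfe : Q.cross s d = false := by rw [hsf]; exact Q.cross_fde d
      by_cases hcs' : Q.cross s' d = true
      · -- the pipe at `s'` crosses the traveller coming from `nxe s'`
        have hb' : s' + d + 2 ≤ n := Q.inShape s' d hcs'
        have hq'1 : s' < Q.nxe d s' := Q.lt_nxe d s'
        have hq'2 : Q.nxe d s' ≤ n - d - 1 := Q.nxe_le_bound hb'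
        have step1 : Relation.TransGen Q.Arc (Q.wd d s) (Q.wd d (Q.nxe d s')) :=
          Q.chain_transGen (n - d) s (Q.nxe d s') (by omega) hfe (Q.cross_nxe d s')
            (by omega) (by omega)
        have hfde_lt : Q.fde d < Q.nxe d s' := by rw [← hsf]; omega
        obtain ⟨he1, he2, he3⟩ := Q.pve_spec hfde_lt (Q.cross_nxe d s')
        set e := Q.pve d (Q.nxe d s') with hedef
        have hes' : e < s' := by
          rcases Nat.lt_trichotomy e s' with h | h | h
          · exact h
          · exfalso; rw [h, hcs'] at he1; cases he1
          · exfalso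
            have := Q.cross_of_lt_nxe h he2
            rw [this] at he1; cases he1
        have hbe : e + d + 2 ≤ n := by omega
        have hwde : Q.wd (d + 1) e = Q.wd d (Q.nxe d s') := by
          rw [Q.wd_succ_sg hbe, sg, if_neg (by simp [he1]), he3]
        have hwds' : Q.wd (d + 1) s' = Q.wd d s' := by
          rw [Q.wd_succ_sg hb', sg, if_pos hcs']
        have hsou : Q.south s' d = Q.wd d (Q.nxe d s') := Q.south_eq_wd_nxe hb'
        have step2 : Relation.TransGen Q.Arc (Q.wd (d+1) e) (Q.wd (d+1) s') := by
          refine ih (d+1) e s' (by omega) hes' (by omega) ?_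
          intro c₁ t hc₁ hct
          rw [hwde, hwds']
          have hne : (t, c₁) ≠ (s', d) := by
            intro hh
            rw [Prod.mk.injEq] at hh
            omega
          have := hred t c₁ s' d hct hcs' hne
          rw [hsou] at this
          intro hcon
          apply this
          rcases hcon with ⟨ha, hb⟩ | ⟨ha, hb⟩
          · exact Or.inr ⟨ha, hb⟩
          · exact Or.inl ⟨ha, hb⟩
        rw [hwde, hwds'] at step2
        exact step1.trans step2
      · -- `s'` is an elbow : direct chain
        have hcs'' : Q.cross s' d = false := by simpa using hcs'
        exact Q.chain_transGen (n - d) s s' (by omega) hfe hcs'' hss (by omega)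
    · -- neither pipe exits at column `d`
      have hdn : d < n := by omega
      have hs'f : s' ≠ Q.fde d := by
        intro h
        have hfds : s < Q.fde d := by omega
        have hcs : Q.cross s d = true := Q.cross_of_lt_fde hfds
        have hnx : Q.nxe d s = s' := by
          refine Q.nxe_eq_of_forall hss (by rw [h]; exact Q.cross_fde d) ?_
          intro u h1 h2
          exact Q.cross_of_lt_fde (by omega)
        refine hnc d s le_rfl hcs (Or.inl ⟨rfl, ?_⟩)
        rw [Q.south_eq_wd_nxe (by omega), hnx]
      have hfd : Q.fde d ≤ n - d - 1 := Q.fde_le_bound hdn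
      -- common recursion step
      have key : ∀ s₁ s'₁, s₁ < s'₁ → s'₁ < n - (d+1) →
          Q.wd (d+1) s₁ = Q.wd d s → Q.wd (d+1) s'₁ = Q.wd d s' →
          Relation.TransGen Q.Arc (Q.wd d s) (Q.wd d s') := by
        intro s₁ s'₁ h1 h2 hu hv
        have := ih (d+1) s₁ s'₁ (by omega) h1 h2 (by
          intro c₁ t hc₁ hct
          rw [hu, hv]
          exact hnc c₁ t (by omega) hct)
        rw [hu, hv] at this
        exact this
      -- new positions
      by_cases hcs : Q.cross s d = true
      · have hbs := Q.inShape s d hcs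
        have hus : Q.wd (d+1) s = Q.wd d s := by
          rw [Q.wd_succ_sg hbs, sg, if_pos hcs]
        by_cases hcs' : Q.cross s' d = true
        · have hbs' := Q.inShape s' d hcs'
          refine key s s' hss (by omega) hus ?_
          rw [Q.wd_succ_sg hbs', sg, if_pos hcs']
        · have hcc' : Q.cross s' d = false := by simpa using hcs'
          have hfl : Q.fde d < s' := lt_of_le_of_ne (Q.fde_le hcc') (Ne.symm hs'f)
          obtain ⟨hp1, hp2, hp3⟩ := Q.pve_spec hfl hcc'
          have hnn : Q.nxe d s < s' := by
            have hle : Q.nxe d s ≤ s' := Q.nxe_le hss hcc'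
            rcases Nat.eq_or_lt_of_le hle with h | h
            · exfalso
              refine hnc d s le_rfl hcs (Or.inl ⟨rfl, ?_⟩)
              rw [Q.south_eq_wd_nxe hbs, h]
            · exact h
          have hple : Q.nxe d s ≤ Q.pve d s' := Q.le_pve (Q.cross_nxe d s) hnn
          have hlts : s < Q.pve d s' := by have := Q.lt_nxe d s; omega
          refine key s (Q.pve d s') hlts (by omega) hus ?_
          rw [Q.wd_succ_sg (by omega), sg, if_neg (by simp [hp1]), hp3]
      · have hcc : Q.cross s d = false := by simpa using hcs
        have hfl : Q.fde d < s := lt_of_le_of_ne (Q.fde_le hcc) (Ne.symm hsf)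
        obtain ⟨hp1, hp2, hp3⟩ := Q.pve_spec hfl hcc
        have hus : Q.wd (d+1) (Q.pve d s) = Q.wd d s := by
          rw [Q.wd_succ_sg (by omega), sg, if_neg (by simp [hp1]), hp3]
        by_cases hcs' : Q.cross s' d = true
        · have hbs' := Q.inShape s' d hcs'
          refine key (Q.pve d s) s' (by omega) (by omega) hus ?_
          rw [Q.wd_succ_sg hbs', sg, if_pos hcs']
        · have hcc' : Q.cross s' d = false := by simpa using hcs'
          have hfl' : Q.fde d < s' := by omega
          obtain ⟨hq1, hq2, hq3⟩ := Q.pve_spec hfl' hcc'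
          have hple : s ≤ Q.pve d s' := Q.le_pve hcc hss
          refine key (Q.pve d s) (Q.pve d s') (by omega) (by omega) hus ?_
          rw [Q.wd_succ_sg (by omega), sg, if_neg (by simp [hq1]), hq3]

end PathLemma

/-! ### Uniqueness -/

section Unique

variable {n : ℕ} {ω π : Equiv.Perm (Fin n)} {Q : PipeDream n}

lemma arc_lt_n {u v : ℕ} (h : Q.Arc u v) : u < n ∧ v < n := by
  rw [arc_iff] at h
  obtain ⟨c, s, hb, _, hu, hv⟩ := h
  have h2 := Q.nxe_le_bound (c := c) (s := s) hb
  constructor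
  · rw [← hu]; exact Q.wd_lt_n c s (by omega)
  · rw [← hv]; exact Q.wd_lt_n c _ (by omega)

lemma linExt_rnk (hlin : Q.LinExt π) {u v : ℕ} (h : Q.Arc u v) : rnk π u < rnk π v := by
  obtain ⟨hun, hvn⟩ := arc_lt_n h
  have := hlin ⟨u, hun⟩ ⟨v, hvn⟩ h
  exact (rnk_lt_iff π ⟨u, hun⟩ ⟨v, hvn⟩).2 this

lemma transGen_rnk (hlin : Q.LinExt π) {u v : ℕ}
    (h : Relation.TransGen Q.Arc u v) : rnk π u < rnk π v := by
  induction h with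
  | single h' => exact linExt_rnk hlin h'
  | tail _ h' ih => exact lt_trans ih (linExt_rnk hlin h')

lemma nxe_congr {P P' : PipeDream n} {c : ℕ} (h : ∀ t, P.cross t c = P'.cross t c)
    (s : ℕ) : P.nxe c s = P'.nxe c s := by
  refine (P'.nxe_eq_of_forall (P.lt_nxe c s) ?_ ?_).symm
  · rw [← h]; exact P.cross_nxe c s
  · intro u h1 h2
    rw [← h]; exact P.cross_of_lt_nxe h1 h2

lemma unique_col (hWL : ∀ i j : Fin n, i < j → π⁻¹ j < π⁻¹ i → ω⁻¹ j < ω⁻¹ i)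
    (hred : Q.Reduced) (hexit : Q.HasExitPerm ω) (hlin : Q.LinExt π) (c : ℕ)
    (hyp : ∀ c', c' < c → ∀ t, Q.cross t c' = (gP ω π).cross t c') (t : ℕ) :
    Q.cross t c = (gP ω π).cross t c := by
  by_cases hcb : n ≤ c + 1
  · rw [Q.cross_eq_false_of (by omega), (gP ω π).cross_eq_false_of (by omega)]
  · have hc : c < n := by omega
    have hwq : ∀ s, Q.wd c s = (gP ω π).wd c s :=
      wd_congr Q (gP ω π) (fun t' c' h => hyp c' h t')
    obtain ⟨hA, hV, hX⟩ := gP_invs (ω := ω) (π := π) c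
    have hg := gP_greedyCol ω π c
    obtain ⟨hp1, hp2⟩ := cpos_spec hc hA
    have hqp : Q.wd c (cpos n c ((gP ω π).wd c) (gx ω c)) = gx ω c := by
      rw [hwq]; exact hp2
    have hfq : Q.fde c = cpos n c ((gP ω π).wd c) (gx ω c) := by
      have hfb := Q.fde_le_bound hc
      have h1 : Q.wd c (Q.fde c) = gx ω c := by
        rw [← Q.exitPipe_eq_wd_fde]
        have h2 := hexit ⟨c, hc⟩
        rw [gx, dif_pos hc]
        exact h2
      exact Q.wd_inj c _ _ (by omega) hp1 (h1.trans hqp.symm)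
    -- transfer of crossing pairs between `Q` and the greedy dream
    have hdir : ∀ (A B : PipeDream n) (c₁ : ℕ), (∀ t', A.cross t' c₁ = B.cross t' c₁) →
        (∀ s, A.wd c₁ s = B.wd c₁ s) → ∀ u v, CPp A c₁ u v → CPp B c₁ u v := by
      rintro A B c₁ hcol hw u v ⟨t', hct, hwst, hsou⟩
      have hbt := A.inShape t' c₁ hct
      refine ⟨t', by rw [← hcol]; exact hct, ?_, ?_⟩
      · show B.wd c₁ t' = u
        rw [← hw]; exact hwst
      · rw [B.south_eq_wd_nxe hbt, ← nxe_congr hcol, ← hw, ← A.south_eq_wd_nxe hbt]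
        exact hsou
    have hcpp : ∀ c₁, c₁ < c → ∀ u v, CPp Q c₁ u v ↔ CPp (gP ω π) c₁ u v := by
      intro c₁ hc₁ u v
      have hw₁ : ∀ s, Q.wd c₁ s = (gP ω π).wd c₁ s :=
        wd_congr Q (gP ω π) (fun t' c' h => hyp c' (by omega) t')
      exact ⟨hdir Q (gP ω π) c₁ (hyp c₁ hc₁) hw₁ u v,
        hdir (gP ω π) Q c₁ (fun t' => (hyp c₁ hc₁ t').symm) (fun s => (hw₁ s).symm) u v⟩
    -- "bad crossings" are impossible in `Q`
    have hbad : ∀ t', Q.cross t' c = true → cpos n c ((gP ω π).wd c) (gx ω c) < t' →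
        rnk π (Q.wd c t') < rnk π (Q.wd c (Q.nxe c t')) → False := by
      intro t' hct hpt hrk
      have hbt := Q.inShape t' c hct
      have hq1 : t' < Q.nxe c t' := Q.lt_nxe c t'
      have hq2 : Q.nxe c t' ≤ n - c - 1 := Q.nxe_le_bound hbt
      have hsou : Q.south t' c = Q.wd c (Q.nxe c t') := Q.south_eq_wd_nxe hbt
      obtain ⟨hX1, hX2⟩ := hX t' (Q.nxe c t') hq1 (by omega)
      rw [← hwq t', ← hwq (Q.nxe c t')] at hX1 hX2
      have hX1' : Q.wd c (Q.nxe c t') < Q.wd c t' ↔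
          ∃ c₁ < c, CPp Q c₁ (Q.wd c (Q.nxe c t')) (Q.wd c t') := by
        rw [hX1]
        constructor
        · rintro ⟨c₁, h1, h2⟩; exact ⟨c₁, h1, (hcpp c₁ h1 _ _).2 h2⟩
        · rintro ⟨c₁, h1, h2⟩; exact ⟨c₁, h1, (hcpp c₁ h1 _ _).1 h2⟩
      rcases Nat.lt_trichotomy (Q.wd c t') (Q.wd c (Q.nxe c t')) with hab | hab | hab
      · -- never crossed before; they cross now, so afterwards there is a path
        have hfq_lt : Q.fde c < Q.nxe c t' := by omega
        obtain ⟨he1, he2, he3⟩ := Q.pve_spec hfq_lt (Q.cross_nxe c t')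
        have het : Q.pve c (Q.nxe c t') < t' := by
          rcases Nat.lt_trichotomy (Q.pve c (Q.nxe c t')) t' with h | h | h
          · exact h
          · exfalso; rw [h, hct] at he1; cases he1
          · exfalso
            have := Q.cross_of_lt_nxe h he2
            rw [this] at he1; cases he1
        have hwde : Q.wd (c+1) (Q.pve c (Q.nxe c t')) = Q.wd c (Q.nxe c t') := by
          rw [Q.wd_succ_sg (by omega), sg, if_neg (by simp [he1]), he3]
        have hwdt : Q.wd (c+1) t' = Q.wd c t' := by
          rw [Q.wd_succ_sg hbt, sg, if_pos hct]
        have hpath := path_lemma hred (n - (c+1)) (c+1) (Q.pve c (Q.nxe c t')) t'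
          le_rfl het (by omega) ?_
        · rw [hwde, hwdt] at hpath
          have := transGen_rnk hlin hpath
          omega
        · intro c₁ t₂ hc₁ hct₂
          rw [hwde, hwdt]
          have hne : (t₂, c₁) ≠ (t', c) := by
            intro hh; rw [Prod.mk.injEq] at hh; omega
          have hh := hred t₂ c₁ t' c hct₂ hct hne
          rw [hsou] at hh
          intro hcon
          apply hh
          rcases hcon with ⟨h1, h2⟩ | ⟨h1, h2⟩
          · exact Or.inr ⟨h1, h2⟩
          · exact Or.inl ⟨h1, h2⟩
      · have := Q.wd_inj c t' (Q.nxe c t') (by omega) (by omega) hab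
        omega
      · -- already crossed before : double crossing
        obtain ⟨c₁, hc₁, t₀, hct₀, hw₀, hs₀⟩ := hX1'.1 hab
        have hne : (t₀, c₁) ≠ (t', c) := by
          intro hh; rw [Prod.mk.injEq] at hh; omega
        refine hred t₀ c₁ t' c hct₀ hct hne (Or.inr ⟨?_, hs₀⟩)
        rw [hsou]; exact hw₀
    -- conclude, box by box
    by_cases hsh : t + c + 2 ≤ n
    · rcases Nat.lt_trichotomy t (cpos n c ((gP ω π).wd c) (gx ω c)) with hto | hto | hto
      · rw [Q.cross_of_lt_fde (by omega), cross_of_lt_cpos hc hA hg hto]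
      · have e1 : Q.cross t c = false := by rw [hto, ← hfq]; exact Q.cross_fde c
        have e2 : (gP ω π).cross t c = false := by
          rw [hto]; exact cross_cpos_eq_false hc hA hg
        rw [e1, e2]
      · have hsm : sufmin π Q c t ↔ sufmin π (gP ω π) c t := by
          constructor <;> intro h r' h1 h2
          · rw [← hwq t, ← hwq r']; exact h r' h1 h2
          · rw [hwq t, hwq r']; exact h r' h1 h2
        have hGiff : (gP ω π).cross t c = false ↔ sufmin π (gP ω π) c t := by
          rw [hg t hsh, elbAt]
          constructor
          · rintro (h | h)
            · omega
            · exact h.2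
          · intro h; exact Or.inr ⟨hto, h⟩
        have hQiff : Q.cross t c = false ↔ sufmin π Q c t := by
          constructor
          · intro hqf
            by_contra hns
            rw [sufmin] at hns
            push_neg at hns
            obtain ⟨r₀, hr₀1, hr₀2, hr₀3⟩ := hns
            have hr₀mem : r₀ ∈ Finset.Ico (t + 1) (n - c) := by
              rw [Finset.mem_Ico]; omega
            obtain ⟨m, hm, hmin⟩ := Finset.exists_min_image (Finset.Ico (t + 1) (n - c))
              (fun y => rnk π (Q.wd c y)) ⟨r₀, hr₀mem⟩
            rw [Finset.mem_Ico] at hm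
            cases hcm : Q.cross m c
            · -- elbow : chain from t to m contradicts the linear extension
              have hchain := Q.chain_transGen (n - c) t m (by omega) hqf hcm
                (by omega) (by omega)
              have h1 := transGen_rnk hlin hchain
              have h2 := hmin r₀ hr₀mem
              omega
            · -- crossing : bad crossing at m
              refine hbad m hcm (by omega) ?_
              have hqm1 : m < Q.nxe c m := Q.lt_nxe c m
              have hqm2 : Q.nxe c m ≤ n - c - 1 := Q.nxe_le_bound (Q.inShape m c hcm)
              have h3 := hmin (Q.nxe c m) (by rw [Finset.mem_Ico]; omega)
              rcases Nat.eq_or_lt_of_le h3 with h4 | h4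
              · exfalso
                have h5 := Q.wd_inj c m (Q.nxe c m) (by omega) (by omega)
                  (rnk_inj π (Q.wd_lt_n c m (by omega)) (Q.wd_lt_n c _ (by omega)) h4)
                omega
              · exact h4
          · intro hsm'
            cases hqc : Q.cross t c
            · rfl
            · exfalso
              have hq1 : t < Q.nxe c t := Q.lt_nxe c t
              have hq2 : Q.nxe c t ≤ n - c - 1 := Q.nxe_le_bound hsh
              exact hbad t hqc hto (hsm' (Q.nxe c t) (by omega) hq1)
        cases hgc : (gP ω π).cross t c
        · rw [hQiff.2 (hsm.2 (hGiff.1 hgc))]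
        · cases hqc : Q.cross t c
          · exfalso
            have := hGiff.2 (hsm.1 (hQiff.1 hqc))
            rw [this] at hgc
            cases hgc
          · rfl
    · rw [Q.cross_eq_false_of hsh, (gP ω π).cross_eq_false_of hsh]

lemma pd_ext {P P' : PipeDream n} (h : ∀ r c, P.cross r c = P'.cross r c) : P = P' := by
  cases P with
  | mk f hf =>
    cases P' with
    | mk g hg =>
      have : f = g := funext fun r => funext fun c => h r c
      subst this
      rfl

lemma unique_all (hWL : ∀ i j : Fin n, i < j → π⁻¹ j < π⁻¹ i → ω⁻¹ j < ω⁻¹ i)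
    (hred : Q.Reduced) (hexit : Q.HasExitPerm ω) (hlin : Q.LinExt π) :
    Q = gP ω π := by
  have key : ∀ c t, Q.cross t c = (gP ω π).cross t c := by
    intro c
    induction c using Nat.strong_induction_on with
    | _ c ih => exact unique_col hWL hred hexit hlin c (fun c' h t => ih c' h t)
  exact pd_ext (fun r c => key c r)

end Unique

end PipeDream

/-- If `π ≤ ω` in the weak order on `S_n`, then `π` is a linear
extension of exactly one acyclic reduced pipe dream `P ∈ Π(ω)`. -/
theorem existsUnique_pipeDream_linExt (n : ℕ) (ω π : Equiv.Perm (Fin n))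
    (h : WeakLE π ω) :
    ∃! P : PipeDream n, P.Reduced ∧ P.HasExitPerm ω ∧ P.Acyclic ∧ P.LinExt π := by
  have hWL : ∀ i j : Fin n, i < j → π⁻¹ j < π⁻¹ i → ω⁻¹ j < ω⁻¹ i := h
  refine ⟨PipeDream.gP ω π, ⟨PipeDream.gP_reduced hWL, PipeDream.gP_hasExitPerm,
    PipeDream.gP_acyclic hWL, PipeDream.gP_linExt hWL⟩, ?_⟩
  rintro Q ⟨hred, hexit, _hacyc, hlin⟩
  exact PipeDream.unique_all hWL hred hexit hlin
end
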